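/- arXiv:1003.3736 — 14 statements merged into one kernel-verified Lean document; each statement's English description precedes it below -/
import Mathlib

section
/- Let K₁ be a Kakeya set of rank r₁ in F^(n-(r-r₁)), considered as a subspace of F^n, and let K := K₁ ∪ (F^n \ F^(n-(r-r₁))). Then K is a Kakeya set of rank r in F^n. -/
/-- `K` is a Kakeya set of rank `r`: it contains a translate of every
`r`-dimensional subspace. -/
def IsKakeya (F : Type) {V : Type} [Field F] [AddCommGroup V] [Module F V]
    (r : ℕ) (K : Set V) : Prop :=
  ∀ L : Submodule F V, Module.finrank F L = r → ∃ v : V, ∀ x ∈ L, v + x ∈ K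

theorem kakeya_lifting {F : Type} [Field F] (n r r₁ : ℕ)
    (h1 : 1 ≤ r₁) (h2 : r₁ ≤ r) (h3 : r ≤ n)
    (e : (Fin (n - (r - r₁)) → F) → (Fin n → F))
    (he : e = fun (x : Fin (n - (r - r₁)) → F) (i : Fin n) => if h : (i : ℕ) < n - (r - r₁) then x ⟨i, h⟩ else 0)
    (K₁ : Set (Fin (n - (r - r₁)) → F)) (hK₁ : IsKakeya F r₁ K₁) :
    IsKakeya F r (e '' K₁ ∪ (Set.range e)ᶜ) := by
  have hmn : n - (r - r₁) ≤ n := Nat.sub_le _ _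
  have hadd : ∀ x y, e (x + y) = e x + e y := by
    intro x y; funext i; simp only [he]
    by_cases h : (i : ℕ) < n - (r - r₁) <;> simp [h]
  have hsmul : ∀ (c : F) x, e (c • x) = c • e x := by
    intro c x; funext i; simp only [he]
    by_cases h : (i : ℕ) < n - (r - r₁) <;> simp [h]
  let eL : (Fin (n - (r - r₁)) → F) →ₗ[F] (Fin n → F) :=
    { toFun := e, map_add' := hadd, map_smul' := hsmul }
  have hinj : Function.Injective eL := by
    intro x y hxy
    funext j
    have := congrFun hxy ⟨j, lt_of_lt_of_le j.2 hmn⟩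
    simpa [eL, he] using this
  set W : Submodule F (Fin n → F) := LinearMap.range eL with hW
  have hrange : Set.range e = (W : Set (Fin n → F)) := by
    ext x; simp [hW, eL, LinearMap.mem_range, Set.mem_range]
  have hWrank : Module.finrank F W = n - (r - r₁) := by
    rw [hW, LinearMap.finrank_range_of_inj hinj, Module.finrank_fin_fun]
  intro L hL
  set d := Module.finrank F ↥(L ⊓ W) with hd
  have hsum : Module.finrank F ↥(L ⊔ W) + d = r + (n - (r - r₁)) := by
    rw [hd, Submodule.finrank_sup_add_finrank_inf_eq, hL, hWrank]
  have hsuple : Module.finrank F ↥(L ⊔ W) ≤ n := by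
    simpa using Submodule.finrank_le (L ⊔ W)
  have hdge : r₁ ≤ d := by omega
  rcases eq_or_lt_of_le hdge with hdeq | hdlt
  · -- d = r₁ : use the Kakeya property
    set M : Submodule F (Fin (n - (r - r₁)) → F) := Submodule.comap eL (L ⊓ W) with hM
    have hmap : Submodule.map eL M = L ⊓ W := by
      rw [hM, Submodule.map_comap_eq, inf_eq_right.mpr]
      exact inf_le_right
    have hMrank : Module.finrank F M = r₁ := by
      have := (Submodule.equivMapOfInjective eL hinj M).finrank_eq
      rw [this, hmap, ← hd, ← hdeq]
    obtain ⟨v₀, hv₀⟩ := hK₁ M hMrank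
    refine ⟨eL v₀, fun x hx => ?_⟩
    by_cases hxr : eL v₀ + x ∈ Set.range e
    · left
      have hxW : eL v₀ + x ∈ W := by rwa [hrange] at hxr
      have hvW : (eL v₀ : Fin n → F) ∈ W := ⟨v₀, rfl⟩
      have hxW' : x ∈ W := by
        have : (eL v₀ + x) - eL v₀ ∈ W := Submodule.sub_mem _ hxW hvW
        simpa using this
      have : x ∈ Submodule.map eL M := by rw [hmap]; exact ⟨hx, hxW'⟩
      obtain ⟨y, hy, rfl⟩ := this
      exact ⟨v₀ + y, hv₀ y hy, hadd v₀ y⟩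
    · right; exact hxr
  · -- d > r₁ : translate off L ⊔ W
    have hne : L ⊔ W ≠ ⊤ := by
      intro h
      rw [h, finrank_top, Module.finrank_fin_fun] at hsum
      omega
    have : ∃ v, v ∉ L ⊔ W := by
      by_contra h
      push_neg at h
      exact hne (Submodule.eq_top_iff'.mpr h)
    obtain ⟨v, hv⟩ := this
    refine ⟨v, fun x hx => Or.inr fun hxr => ?_⟩
    have hxW : v + x ∈ L ⊔ W := by
      rw [hrange] at hxr
      exact Submodule.mem_sup_right hxr
    have hxL : x ∈ L ⊔ W := Submodule.mem_sup_left hx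
    exact hv (by simpa using Submodule.sub_mem _ hxW hxL)
end

section
/- If K₁ ⊆ F_q^m and K₂ ⊆ F_q^n are Kakeya sets of rank r, then K₁ × K₂ is a Kakeya set of rank r in F_q^(m+n). -/
lemma exists_superspace {F V : Type} [Field F] [AddCommGroup V] [Module F V]
    [FiniteDimensional F V] (r : ℕ) (hr : r ≤ Module.finrank F V) :
    ∀ d (W : Submodule F V), Module.finrank F W + d = r →
      ∃ W', W ≤ W' ∧ Module.finrank F W' = r := by
  intro d
  induction d with
  | zero => exact fun W hW => ⟨W, le_rfl, by omega⟩
  | succ d ih =>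
    intro W hW
    have hlt : Module.finrank F W < Module.finrank F V := by omega
    obtain ⟨x, hx⟩ := W.exists_of_finrank_lt hlt
    have hxW : x ∉ W := by simpa using hx 1 one_ne_zero
    have hx0 : x ≠ 0 := fun h => hxW (h ▸ W.zero_mem)
    have hdisj : Disjoint W (Submodule.span F {x}) :=
      (Submodule.disjoint_span_singleton' hx0).mpr hxW
    have hrank := Submodule.finrank_sup_add_finrank_inf_eq W (Submodule.span F {x})
    rw [hdisj.eq_bot, finrank_bot, finrank_span_singleton hx0, add_zero] at hrank
    obtain ⟨W', hW', hW'r⟩ := ih (W ⊔ Submodule.span F {x}) (by omega)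
    exact ⟨W', le_trans le_sup_left hW', hW'r⟩

lemma isKakeya_of_le {F V : Type} [Field F] [AddCommGroup V] [Module F V]
    [FiniteDimensional F V] {r : ℕ} {K : Set V} (h : IsKakeya F r K)
    (hr : r ≤ Module.finrank F V) (W : Submodule F V)
    (hW : Module.finrank F W ≤ r) : ∃ v : V, ∀ x ∈ W, v + x ∈ K := by
  obtain ⟨W', hle, hr'⟩ := exists_superspace r hr (r - Module.finrank F W) W (by omega)
  obtain ⟨v, hv⟩ := h W' hr'
  exact ⟨v, fun x hx => hv x (hle hx)⟩

theorem kakeya_product {F : Type} [Field F] [Fintype F] (m n r : ℕ)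
    (hr : 1 ≤ r) (hm : r ≤ m) (hn : r ≤ n)
    (K₁ : Set (Fin m → F)) (K₂ : Set (Fin n → F))
    (h1 : IsKakeya F r K₁) (h2 : IsKakeya F r K₂) :
    IsKakeya F r (K₁ ×ˢ K₂) := by
  intro L hL
  have hm' : r ≤ Module.finrank F (Fin m → F) := by
    simpa [Module.finrank_pi] using hm
  have hn' : r ≤ Module.finrank F (Fin n → F) := by
    simpa [Module.finrank_pi] using hn
  set L₁ := L.map (LinearMap.fst F (Fin m → F) (Fin n → F)) with hL₁def
  set L₂ := L.map (LinearMap.snd F (Fin m → F) (Fin n → F)) with hL₂def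
  have h₁le : Module.finrank F L₁ ≤ r := hL ▸ Submodule.finrank_map_le _ _
  have h₂le : Module.finrank F L₂ ≤ r := hL ▸ Submodule.finrank_map_le _ _
  obtain ⟨v₁, hv₁⟩ := isKakeya_of_le h1 hm' L₁ h₁le
  obtain ⟨v₂, hv₂⟩ := isKakeya_of_le h2 hn' L₂ h₂le
  refine ⟨(v₁, v₂), fun x hx => ?_⟩
  constructor
  · exact hv₁ x.1 ⟨x, hx, rfl⟩
  · exact hv₂ x.2 ⟨x, hx, rfl⟩
end

section
/- Let f: F → F be a non-linear function on a finite field F (i.e., |I_f(t)| > 1 for all t, where I_f(t) := {f(x) + t·x : x ∈ F}). Then there exists a rank-1 Kakeya set K ⊆ F^n with |K| = Σ_{t ∈ F} (|I_f(t)|^n - 1)/(|I_f(t)| - 1). -/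
open Finset

namespace KakeyaFromIfAux

/-- Geometric sum identity in ℕ with truncated subtraction/division. -/
lemma geom_div (s m : ℕ) (hs : 2 ≤ s) :
    (s ^ m - 1) / (s - 1) = ∑ j ∈ Finset.range m, s ^ j := by
  have h1 : (∑ j ∈ Finset.range m, s ^ j) * (s - 1) = s ^ m - 1 := by
    induction m with
    | zero => simp
    | succ k ih =>
      rw [Finset.sum_range_succ, add_mul, ih]
      have h2 : 1 ≤ s ^ k := Nat.one_le_pow _ _ (by omega)
      have h3 : s ^ k * s = s ^ (k + 1) := by rw [pow_succ]
      have h5 : s ^ k * (s - 1) = s ^ (k + 1) - s ^ k := by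
        rw [Nat.mul_sub, mul_one, h3]
      have h4 : s ^ k ≤ s ^ (k + 1) := Nat.pow_le_pow_right (by omega) (by omega)
      omega
  rw [← h1, Nat.mul_div_cancel _ (by omega : 0 < s - 1)]

/-- Induction giving the global bound `∑ t, ∑_{j<m} s t ^ j ≤ q ^ m`. -/
lemma sum_geom_le {α : Type} [Fintype α] (s : α → ℕ) (q : ℕ)
    (hcard : Fintype.card α = q) (hsq : ∀ t, s t ≤ q)
    (hsum : (∑ t, s t) + q ≤ q * q) :
    ∀ m : ℕ, 1 ≤ m → (∑ t, ∑ j ∈ Finset.range m, s t ^ j) ≤ q ^ m := by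
  intro m hm
  induction m with
  | zero => omega
  | succ k ih =>
    rcases Nat.eq_or_lt_of_le hm with h1 | h1
    · -- k + 1 = 1
      have hk : k = 0 := by omega
      subst hk
      simp [hcard]
    · have hk : 1 ≤ k := by omega
      have IH := ih hk
      -- rewrite inner sums
      have hsplit : ∀ t, ∑ j ∈ Finset.range (k + 1), s t ^ j
          = 1 + s t * ∑ j ∈ Finset.range k, s t ^ j := by
        intro t
        rw [Finset.sum_range_succ']
        simp [pow_succ, Finset.mul_sum, mul_comm, add_comm]
      have hA1 : ∀ t, 1 ≤ ∑ j ∈ Finset.range k, s t ^ j := by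
        intro t
        calc 1 = ∑ j ∈ Finset.range 1, s t ^ j := by simp
        _ ≤ _ := Finset.sum_le_sum_of_subset (by
              intro x hx; simp at hx ⊢; omega)
      set A : α → ℕ := fun t => ∑ j ∈ Finset.range k, s t ^ j with hA
      have hq_le : q ≤ ∑ t, (q - s t) := by
        have h2 : (∑ t, s t) + (∑ t, (q - s t)) = q * q := by
          rw [← Finset.sum_add_distrib]
          have : ∀ t ∈ (Finset.univ : Finset α), s t + (q - s t) = q := by
            intro t _; have := hsq t; omega
          rw [Finset.sum_congr rfl this]
          simp [hcard, mul_comm]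
        omega
      calc ∑ t, ∑ j ∈ Finset.range (k + 1), s t ^ j
          = ∑ t, (1 + s t * A t) := by
            exact Finset.sum_congr rfl fun t _ => hsplit t
        _ = q + ∑ t, s t * A t := by
            rw [Finset.sum_add_distrib]; simp [hcard]
        _ ≤ (∑ t, (q - s t)) + ∑ t, s t * A t := by
            exact Nat.add_le_add_right hq_le _
        _ ≤ (∑ t, (q - s t) * A t) + ∑ t, s t * A t := by
            apply Nat.add_le_add_right
            apply Finset.sum_le_sum
            intro t _
            exact Nat.le_mul_of_pos_right _ (hA1 t)
        _ = ∑ t, q * A t := by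
            rw [← Finset.sum_add_distrib]
            apply Finset.sum_congr rfl
            intro t _
            have := hsq t
            have : (q - s t) + s t = q := by omega
            rw [← add_mul, this]
        _ = q * ∑ t, A t := by rw [Finset.mul_sum]
        _ ≤ q * q ^ k := Nat.mul_le_mul_left _ IH
        _ = q ^ (k + 1) := by rw [pow_succ, mul_comm]

end KakeyaFromIfAux

open KakeyaFromIfAux in
theorem kakeya_from_If {F : Type} [Field F] [Fintype F] [DecidableEq F]
    (n : ℕ) (hn : 1 ≤ n) (f : F → F)
    (hf : ∀ t : F, 1 < (Finset.image (fun x => f x + t * x) Finset.univ).card) :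
    ∃ K : Finset (Fin n → F),
      (∀ d : Fin n → F, d ≠ 0 → ∃ b : Fin n → F, ∀ t : F, b + t • d ∈ K) ∧
      K.card = ∑ t : F,
        ((Finset.image (fun x => f x + t * x) Finset.univ).card ^ n - 1) /
          ((Finset.image (fun x => f x + t * x) Finset.univ).card - 1) := by
  classical
  set q := Fintype.card F with hq
  set I : F → Finset F := fun t => Finset.image (fun x => f x + t * x) Finset.univ with hI
  set s : F → ℕ := fun t => (I t).card with hs
  have hs2 : ∀ t, 2 ≤ s t := fun t => hf t
  have hsq : ∀ t, s t ≤ q := fun t => Finset.card_le_univ _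
  have hq2 : 2 ≤ q := Fintype.one_lt_card
  -- fibers
  set fib : F → F → Finset F := fun t y => Finset.univ.filter (fun x => f x + t * x = y)
    with hfib
  have hfibsum : ∀ t, q = ∑ y ∈ I t, (fib t y).card := fun t =>
    Finset.card_eq_sum_card_image (fun x => f x + t * x) Finset.univ
  have hfib1 : ∀ t, ∀ y ∈ I t, 1 ≤ (fib t y).card := by
    intro t y hy
    rw [Nat.one_le_iff_ne_zero, ← Nat.pos_iff_ne_zero, Finset.card_pos]
    obtain ⟨x, -, hx⟩ := Finset.mem_image.1 hy
    exact ⟨x, by simp [hfib, hx]⟩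
  have hfibq : ∀ t, ∀ y ∈ I t, (fib t y).card + 1 ≤ q := by
    intro t y hy
    obtain ⟨y', hy', hyy'⟩ := Finset.exists_mem_ne (hf t) y
    have hdisj : Disjoint (fib t y) (fib t y') := by
      rw [Finset.disjoint_left]
      intro a ha ha'
      simp only [hfib, Finset.mem_filter] at ha ha'
      exact hyy' (ha.2 ▸ ha'.2 ▸ rfl)
    have := Finset.card_le_univ ((fib t y) ∪ (fib t y'))
    rw [Finset.card_union_of_disjoint hdisj] at this
    have h1 := hfib1 t y' hy'
    omega
  -- collision counting: ∑ t (q - s t) ≥ q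
  set P : F → ℕ := fun t =>
    ((Finset.univ.offDiag : Finset (F × F)).filter
      (fun p => f p.1 + t * p.1 = f p.2 + t * p.2)).card with hP
  have hPsum : ∑ t, P t = q * q - q := by
    have h1 : ∀ t : F, P t = ∑ p ∈ (Finset.univ.offDiag : Finset (F × F)),
        (if f p.1 + t * p.1 = f p.2 + t * p.2 then 1 else 0) := by
      intro t; simp only [hP]; rw [Finset.card_filter]
    calc ∑ t, P t
        = ∑ t : F, ∑ p ∈ (Finset.univ.offDiag : Finset (F × F)),
            (if f p.1 + t * p.1 = f p.2 + t * p.2 then 1 else 0) :=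
          Finset.sum_congr rfl fun t _ => h1 t
      _ = ∑ p ∈ (Finset.univ.offDiag : Finset (F × F)), ∑ t : F,
            (if f p.1 + t * p.1 = f p.2 + t * p.2 then 1 else 0) := Finset.sum_comm
      _ = ∑ p ∈ (Finset.univ.offDiag : Finset (F × F)), 1 := by
          apply Finset.sum_congr rfl
          intro p hp
          have hne : p.1 ≠ p.2 := (Finset.mem_offDiag.1 hp).2.2
          rw [← Finset.card_filter]
          rw [Finset.card_eq_one]
          refine ⟨(f p.2 - f p.1) / (p.1 - p.2), ?_⟩
          ext t
          simp only [Finset.mem_filter, Finset.mem_univ, true_and, Finset.mem_singleton]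
          have hsub : p.1 - p.2 ≠ 0 := sub_ne_zero.2 hne
          rw [eq_div_iff hsub]
          constructor
          · intro h; linear_combination h
          · intro h; linear_combination h
      _ = q * q - q := by
          rw [Finset.sum_const, Finset.offDiag_card]
          simp [hq, Finset.card_univ]
  have hPle : ∀ t, P t ≤ (q - 1) * (q - s t) := by
    intro t
    have hdecomp : P t = ∑ y ∈ I t,
        (((Finset.univ.offDiag : Finset (F × F)).filter
          (fun p => f p.1 + t * p.1 = f p.2 + t * p.2)).filter
            (fun p => f p.1 + t * p.1 = y)).card := by
      rw [hP]
      apply Finset.card_eq_sum_card_fiberwise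
      intro p _
      exact Finset.mem_image.2 ⟨p.1, Finset.mem_univ _, rfl⟩
    have hyeq : ∀ y ∈ I t,
        (((Finset.univ.offDiag : Finset (F × F)).filter
          (fun p => f p.1 + t * p.1 = f p.2 + t * p.2)).filter
            (fun p => f p.1 + t * p.1 = y)) = (fib t y).offDiag := by
      intro y _
      ext p
      simp only [Finset.mem_filter, Finset.mem_offDiag, hfib, Finset.mem_univ, true_and]
      constructor
      · rintro ⟨⟨hne, hcol⟩, hval⟩
        exact ⟨hval, by rw [← hcol]; exact hval, hne⟩
      · rintro ⟨h1, h2, hne⟩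
        exact ⟨⟨hne, h1.trans h2.symm⟩, h1⟩
    have hycard : ∀ y ∈ I t, ((fib t y).offDiag).card ≤ (q - 1) * ((fib t y).card - 1) := by
      intro y hy
      rw [Finset.offDiag_card]
      have h1 := hfib1 t y hy
      have h2 := hfibq t y hy
      set m := (fib t y).card
      have : m * m - m = m * (m - 1) := by
        rw [Nat.mul_sub, mul_one]
      rw [this]
      exact Nat.mul_le_mul (by omega) le_rfl
    calc P t = ∑ y ∈ I t, (((Finset.univ.offDiag : Finset (F × F)).filter
          (fun p => f p.1 + t * p.1 = f p.2 + t * p.2)).filter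
            (fun p => f p.1 + t * p.1 = y)).card := hdecomp
      _ = ∑ y ∈ I t, ((fib t y).offDiag).card :=
          Finset.sum_congr rfl fun y hy => by rw [hyeq y hy]
      _ ≤ ∑ y ∈ I t, (q - 1) * ((fib t y).card - 1) :=
          Finset.sum_le_sum hycard
      _ = (q - 1) * ∑ y ∈ I t, ((fib t y).card - 1) := by rw [Finset.mul_sum]
      _ = (q - 1) * (q - s t) := by
          congr 1
          have hst : s t = ∑ y ∈ I t, 1 := by
            simp only [hs]
            rw [Finset.card_eq_sum_ones]
          have h1 : ∑ y ∈ I t, ((fib t y).card - 1) + s t = ∑ y ∈ I t, (fib t y).card := by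
            rw [hst, ← Finset.sum_add_distrib]
            apply Finset.sum_congr rfl
            intro y hy
            have := hfib1 t y hy
            omega
          have h2 := hfibsum t
          omega
  have hsum : (∑ t, s t) + q ≤ q * q := by
    have h1 : q * q - q ≤ (q - 1) * ∑ t, (q - s t) := by
      rw [← hPsum, Finset.mul_sum]
      exact Finset.sum_le_sum fun t _ => hPle t
    have h2 : q ≤ ∑ t, (q - s t) := by
      by_contra hcon
      push_neg at hcon
      have h3 : (q - 1) * ∑ t, (q - s t) ≤ (q - 1) * (q - 1) := by
        apply Nat.mul_le_mul_left
        omega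
      have h5 : q * q - q = (q - 1) * q := by
        rw [Nat.sub_mul, one_mul]
      have h6 : (q - 1) * q ≤ (q - 1) * (q - 1) := by
        rw [← h5]; exact h1.trans h3
      have h7 : q ≤ q - 1 := Nat.le_of_mul_le_mul_left h6 (by omega)
      omega
    have h4 : (∑ t, s t) + (∑ t, (q - s t)) = q * q := by
      rw [← Finset.sum_add_distrib]
      have : ∀ t ∈ (Finset.univ : Finset F), s t + (q - s t) = q := by
        intro t _; have := hsq t; omega
      rw [Finset.sum_congr rfl this]
      simp [hq, mul_comm, Finset.card_univ]
    omega
  -- the target cardinality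
  set N : ℕ := ∑ t : F, ∑ j ∈ Finset.range n, s t ^ j with hN
  have hNle : N ≤ q ^ n := sum_geom_le s q rfl hsq hsum n hn
  -- slices
  set A : F → ℕ → (Fin n → Finset F) := fun t j i =>
    if (i : ℕ) < j then I t else if (i : ℕ) = j then {f 1 + t} else {f 0} with hA
  set S : F → ℕ → Finset (Fin n → F) := fun t j => Fintype.piFinset (A t j) with hS
  set K0 : Finset (Fin n → F) :=
    Finset.univ.biUnion (fun t => (Finset.range n).biUnion (fun j => S t j)) with hK0
  -- cardinality bound on slices
  have hScard : ∀ t, ∀ j < n, (S t j).card ≤ s t ^ j := by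
    intro t j hj
    rw [hS]
    rw [Fintype.card_piFinset]
    have h1 : ∀ i : Fin n, (A t j i).card = if (i : ℕ) < j then s t else 1 := by
      intro i
      rw [hA]
      by_cases h : (i : ℕ) < j
      · simp [h, hs]
      · by_cases h2 : (i : ℕ) = j <;> simp [h, h2]
    rw [Finset.prod_congr rfl (fun i _ => h1 i)]
    rw [Finset.prod_ite, Finset.prod_const, Finset.prod_const_one, mul_one]
    have h2 : (Finset.univ.filter (fun i : Fin n => (i : ℕ) < j)) = Finset.Iio (⟨j, hj⟩ : Fin n) := by
      ext i
      simp [Fin.lt_def]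
    rw [h2, Fin.card_Iio]
  -- K0 is small
  have hK0card : K0.card ≤ N := by
    rw [hK0]
    calc (Finset.univ.biUnion (fun t => (Finset.range n).biUnion (fun j => S t j))).card
        ≤ ∑ t : F, ((Finset.range n).biUnion (fun j => S t j)).card :=
          Finset.card_biUnion_le
      _ ≤ ∑ t : F, ∑ j ∈ Finset.range n, (S t j).card :=
          Finset.sum_le_sum fun t _ => Finset.card_biUnion_le
      _ ≤ N := Finset.sum_le_sum fun t _ => Finset.sum_le_sum fun j hj =>
          hScard t j (Finset.mem_range.1 hj)
  -- extend K0 to a set of size exactly N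
  have hcardF : N ≤ (Finset.univ : Finset (Fin n → F)).card := by
    rw [Finset.card_univ, Fintype.card_fun]
    simpa [hq] using hNle
  obtain ⟨K, hK0K, -, hKcard⟩ :=
    Finset.exists_subsuperset_card_eq (Finset.subset_univ K0) hK0card hcardF
  refine ⟨K, ?_, ?_⟩
  · -- Kakeya property
    intro d hd
    have hne : (Finset.univ.filter (fun i : Fin n => d i ≠ 0)).Nonempty := by
      rw [Finset.filter_nonempty_iff]
      obtain ⟨i, hi⟩ := Function.ne_iff.1 hd
      exact ⟨i, Finset.mem_univ _, hi⟩
    set j : Fin n := (Finset.univ.filter (fun i : Fin n => d i ≠ 0)).max' hne with hj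
    have hdj : d j ≠ 0 := by
      have := (Finset.univ.filter (fun i : Fin n => d i ≠ 0)).max'_mem hne
      exact (Finset.mem_filter.1 this).2
    have htop : ∀ i : Fin n, j < i → d i = 0 := by
      intro i hi
      by_contra hcon
      have : i ≤ j := Finset.le_max' _ i (Finset.mem_filter.2 ⟨Finset.mem_univ _, hcon⟩)
      exact absurd hi (not_lt.2 this)
    set d' : Fin n → F := fun i => (d j)⁻¹ * d i with hd'
    refine ⟨fun i => f (d' i), ?_⟩
    intro t
    apply hK0K
    rw [hK0]
    apply Finset.mem_biUnion.2
    refine ⟨t * d j, Finset.mem_univ _, ?_⟩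
    apply Finset.mem_biUnion.2
    refine ⟨(j : ℕ), Finset.mem_range.2 j.isLt, ?_⟩
    simp only [hS]
    rw [Fintype.mem_piFinset]
    intro i
    have hmem : ((fun i => f (d' i)) + t • d) i = f (d' i) + (t * d j) * d' i := by
      simp only [Pi.add_apply, Pi.smul_apply, smul_eq_mul, hd']
      field_simp
    rw [hmem]
    simp only [hA]
    rcases lt_trichotomy ((i : ℕ)) ((j : ℕ)) with h | h | h
    · rw [if_pos h]
      exact Finset.mem_image.2 ⟨d' i, Finset.mem_univ _, rfl⟩
    · have hij : i = j := Fin.ext h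
      rw [if_neg (by omega), if_pos h, hij]
      have hd'j : d' j = 1 := by
        simp only [hd']
        exact inv_mul_cancel₀ hdj
      rw [hd'j, mul_one]
      exact Finset.mem_singleton_self _
    · rw [if_neg (by omega), if_neg (by omega)]
      have hdi : d i = 0 := htop i (Fin.lt_def.mpr h)
      have hd'i : d' i = 0 := by simp only [hd', hdi, mul_zero]
      rw [hd'i, mul_zero, add_zero]
      exact Finset.mem_singleton_self _
  · -- cardinality
    rw [hKcard, hN]
    apply Finset.sum_congr rfl
    intro t _
    exact (geom_div (s t) n (hs2 t)).symm
end

section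
/- Suppose q is an even power of 2 and f(x) = x³. Then for every t ∈ F_q, the set I_f(t) = {x³ + t·x : x ∈ F_q} has at most (2q+1)/3 elements. -/
open Finset Polynomial

-- fibers of a cubic have at most 3 elements
lemma cubic_fiber_card_le {F : Type} [Field F] [Fintype F] [DecidableEq F] (t c : F) :
    (Finset.univ.filter fun x : F => x ^ 3 + t * x = c).card ≤ 3 := by
  classical
  set p : Polynomial F := X ^ 3 + C t * X - C c with hp
  have hpne : p ≠ 0 := by
    intro h
    have h3 : p.coeff 3 = 1 := by
      simp [hp, coeff_X_pow, coeff_C]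
    rw [h] at h3
    simp at h3
  have hdeg : p.natDegree ≤ 3 := by
    have h1 : (X ^ 3 + C t * X : Polynomial F).natDegree ≤ 3 := by
      apply le_trans (natDegree_add_le _ _)
      simp [natDegree_X_pow]
      exact le_trans (natDegree_C_mul_le t X) (by simp)
    calc p.natDegree ≤ max (X ^ 3 + C t * X : Polynomial F).natDegree (C c).natDegree :=
          natDegree_sub_le _ _
      _ ≤ 3 := by simp [h1]
  have hsub : (Finset.univ.filter fun x : F => x ^ 3 + t * x = c) ⊆ p.roots.toFinset := by
    intro x hx
    rw [Finset.mem_filter] at hx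
    rw [Multiset.mem_toFinset, mem_roots hpne]
    simp [hp, IsRoot, sub_eq_zero, hx.2]
  calc (Finset.univ.filter fun x : F => x ^ 3 + t * x = c).card
      ≤ p.roots.toFinset.card := Finset.card_le_card hsub
    _ ≤ Multiset.card p.roots := Multiset.toFinset_card_le _
    _ ≤ p.natDegree := p.card_roots'
    _ ≤ 3 := hdeg

theorem If_card_even_power_of_two {F : Type} [Field F] [Fintype F] [DecidableEq F]
    (k : ℕ) (hk : 1 ≤ k) (hcard : Fintype.card F = 2 ^ (2 * k)) (t : F) :
    (Finset.image (fun x => x ^ 3 + t * x) Finset.univ).card ≤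
      (2 * Fintype.card F + 1) / 3 := by
  classical
  set q := Fintype.card F with hq
  set g : F → F := fun x => x ^ 3 + t * x with hg
  -- characteristic 2
  have h2 : (2 : F) = 0 := by
    have h0 : ((2 : F)) ^ (2 * k) = 0 := by
      have := FiniteField.cast_card_eq_zero F
      rw [← hq, hcard] at this
      push_cast at this
      exact_mod_cast this
    exact pow_eq_zero_iff (by omega) |>.mp h0
  -- q mod 3
  have hq3 : q % 3 = 1 := by
    have h4 : (4 : ℕ) ^ k % 3 = 1 := by
      have := Nat.pow_mod 4 k 3
      simpa using this
    rw [hcard, pow_mul]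
    simpa using h4
  have hq4 : 4 ≤ q := by
    rw [hcard]
    calc 4 = 2 ^ 2 := by norm_num
      _ ≤ 2 ^ (2 * k) := Nat.pow_le_pow_right (by norm_num) (by omega)
  -- a primitive cube root of unity
  haveI : Fact (Nat.Prime 3) := ⟨by norm_num⟩
  have hdvd : 3 ∣ Fintype.card Fˣ := by
    rw [Fintype.card_units, ← hq]
    omega
  obtain ⟨ζ, hζ⟩ := exists_prime_orderOf_dvd_card 3 hdvd
  set ω : F := (ζ : F) with hωdef
  have hω3 : ω ^ 3 = 1 := by
    have := pow_orderOf_eq_one ζ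
    rw [hζ] at this
    have := congrArg (Units.val) this
    push_cast at this
    exact_mod_cast this
  have hωne1 : ω ≠ 1 := by
    intro h
    have : ζ = 1 := Units.ext (by simpa [hωdef] using h)
    rw [this, orderOf_one] at hζ
    norm_num at hζ
  have hω : ω ^ 2 + ω + 1 = 0 := by
    have hfac : (ω - 1) * (ω ^ 2 + ω + 1) = 0 := by linear_combination hω3
    rcases mul_eq_zero.mp hfac with h | h
    · exact absurd (sub_eq_zero.mp h) hωne1
    · exact h
  -- squaring is injective (char 2), hence surjective
  have hsqinj : ∀ a b : F, a * a = b * b → a = b := by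
    intro a b h
    have h0 : (a - b) * (a - b) = 0 := by
      linear_combination h + (b * b - a * b) * h2
    exact sub_eq_zero.mp (mul_self_eq_zero.mp h0)
  obtain ⟨u₀, hu₀⟩ := Finite.injective_iff_surjective.mp
    (fun a b h => hsqinj a b h) (ω * t)
  have hu₀' : u₀ * u₀ = ω * t := hu₀
  -- fibers
  set I := Finset.image g Finset.univ with hI
  have hsum : ∑ c ∈ I, (Finset.univ.filter fun x => g x = c).card = q := by
    rw [hq, ← Finset.card_univ, Finset.card_eq_sum_card_image g Finset.univ]
  have hfib3 : ∀ c : F, (Finset.univ.filter fun x => g x = c).card ≤ 3 :=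
    fun c => cubic_fiber_card_le t c
  have hfib1 : ∀ c ∈ I, 1 ≤ (Finset.univ.filter fun x => g x = c).card := by
    intro c hc
    rw [hI, Finset.mem_image] at hc
    obtain ⟨x, _, hx⟩ := hc
    rw [Nat.one_le_iff_ne_zero, ← Nat.pos_iff_ne_zero, Finset.card_pos]
    exact ⟨x, by simp [hx]⟩
  -- the pair set
  set P := Finset.univ.offDiag.filter (fun p : F × F => g p.1 = g p.2) with hPdef
  have hPS : P.card = ∑ c ∈ I, ((Finset.univ.filter fun x => g x = c).offDiag).card := by
    rw [Finset.card_eq_sum_card_fiberwise (f := fun p : F × F => g p.1) (t := I)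
      (fun p hp => by
        rw [hI, Finset.mem_coe, Finset.mem_image]
        exact ⟨p.1, Finset.mem_univ _, rfl⟩)]
    apply Finset.sum_congr rfl
    intro c hc
    congr 1
    ext ⟨a, b⟩
    simp only [Finset.mem_filter, Finset.mem_offDiag, Finset.mem_univ, true_and, hPdef]
    constructor
    · rintro ⟨⟨hab, hgab⟩, hga⟩
      exact ⟨hga, by rw [← hgab]; exact hga, hab⟩
    · rintro ⟨hga, hgb, hab⟩
      exact ⟨⟨hab, by rw [hga, hgb]⟩, hga⟩
  -- injection from a large set into P
  have hDP : q - 2 ≤ P.card := by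
    set D : Finset F := Finset.univ \ {0, u₀} with hD
    have hDcard : q - 2 ≤ D.card := by
      have hsub : ({0, u₀} : Finset F) ⊆ Finset.univ := Finset.subset_univ _
      have h1 : D.card = q - ({0, u₀} : Finset F).card := by
        rw [hD, Finset.card_sdiff_of_subset hsub, Finset.card_univ, hq]
      have h2' : ({0, u₀} : Finset F).card ≤ 2 :=
        le_trans (Finset.card_insert_le _ _) (by simp)
      omega
    refine le_trans hDcard (Finset.card_le_card_of_injOn
      (fun u => (ω ^ 2 * u + ω * (t * u⁻¹), u + t * u⁻¹)) ?_ ?_)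
    · -- maps into P
      intro u hu
      rw [hD, Finset.mem_coe, Finset.mem_sdiff] at hu
      have hu0 : u ≠ 0 := by
        intro h; exact hu.2 (by simp [h])
      have huu₀ : u ≠ u₀ := by
        intro h; exact hu.2 (by simp [h])
      set w : F := t * u⁻¹ with hw
      have huw : u * w = t := by
        rw [hw]; field_simp
      set x : F := ω ^ 2 * u + ω * w with hx
      set y : F := u + w with hy
      have hQ : x ^ 2 + x * y + y ^ 2 = t := by
        rw [hx, hy]
        linear_combination (u ^ 2 * (ω ^ 2 - ω + 1) + u * w * (2 * ω - 1) + w ^ 2) * hω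
          + (u * w) * h2 + huw
      have hne : x ≠ y := by
        intro h
        have hsq : u * u = ω * t := by
          linear_combination ((ω + 1) * u) * h + ω * huw
            + (-(ω * u ^ 2) - u * w) * hω + ((1 + ω) * u ^ 2 + u * w) * h2
        exact huu₀ (hsqinj u u₀ (by rw [hsq, hu₀']))
      have hgxy : g x = g y := by
        show x ^ 3 + t * x = y ^ 3 + t * y
        linear_combination (x - y) * hQ + (t * x - t * y) * h2
      rw [hPdef, Finset.mem_coe, Finset.mem_filter, Finset.mem_offDiag]
      exact ⟨⟨Finset.mem_univ _, Finset.mem_univ _, hne⟩, hgxy⟩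
    · -- injective
      intro a ha b hb h
      simp only [hD, Finset.coe_sdiff, Set.mem_diff, Finset.coe_univ, Set.mem_univ,
        true_and, Finset.coe_insert, Set.mem_insert_iff, Finset.coe_singleton,
        Set.mem_singleton_iff, not_or] at ha hb
      have recov : ∀ c : F, ω ^ 2 * c + ω * (t * c⁻¹) + ω * (c + t * c⁻¹) = c := by
        intro c
        linear_combination c * hω + (ω * t * c⁻¹ - c) * h2
      have h1 := congrArg Prod.fst h
      have h2' := congrArg Prod.snd h
      simp only at h1 h2'
      calc a = ω ^ 2 * a + ω * (t * a⁻¹) + ω * (a + t * a⁻¹) := (recov a).symm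
        _ = ω ^ 2 * b + ω * (t * b⁻¹) + ω * (b + t * b⁻¹) := by rw [h1, h2']
        _ = b := recov b
  -- main counting inequality
  have hmain : 3 * I.card + ∑ c ∈ I, (Finset.univ.filter fun x => g x = c).card *
      (Finset.univ.filter fun x => g x = c).card ≤ 4 * q := by
    have hstep : ∑ c ∈ I, (3 + (Finset.univ.filter fun x => g x = c).card *
        (Finset.univ.filter fun x => g x = c).card)
        ≤ ∑ c ∈ I, 4 * (Finset.univ.filter fun x => g x = c).card := by
      apply Finset.sum_le_sum
      intro c hc
      have h1 := hfib1 c hc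
      have h3 := hfib3 c
      set n := (Finset.univ.filter fun x => g x = c).card
      interval_cases n <;> norm_num
    rw [Finset.sum_add_distrib, Finset.sum_const, smul_eq_mul, ← Finset.mul_sum, hsum] at hstep
    omega
  -- relate sum of squares to P.card
  have hSsum : P.card + q = ∑ c ∈ I, (Finset.univ.filter fun x => g x = c).card *
      (Finset.univ.filter fun x => g x = c).card := by
    rw [hPS, ← hsum, ← Finset.sum_add_distrib]
    apply Finset.sum_congr rfl
    intro c _
    rw [Finset.offDiag_card]
    set n := (Finset.univ.filter fun x => g x = c).card
    have : n ≤ n * n := by nlinarith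
    omega
  omega
end

section
/- For every prime power q and every function f: F_q → F_q, there exists t ∈ F_q such that |I_f(t)| > q/2, where I_f(t) := {f(x) + t·x : x ∈ F_q}. -/
open Finset

lemma filter_t_card_one {F : Type} [Field F] [Fintype F] [DecidableEq F]
    (f : F → F) {x y : F} (hxy : x ≠ y) :
    (univ.filter (fun t : F => f x + t * x = f y + t * y)).card = 1 := by
  have hxy' : x - y ≠ 0 := sub_ne_zero.mpr hxy
  have : univ.filter (fun t : F => f x + t * x = f y + t * y)
      = {(f y - f x) / (x - y)} := by
    ext t
    simp only [mem_filter, mem_univ, true_and, mem_singleton]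
    rw [eq_div_iff hxy']
    constructor
    · intro h; ring_nf; linear_combination h
    · intro h; linear_combination h
  rw [this, card_singleton]

theorem exists_large_If {F : Type} [Field F] [Fintype F] [DecidableEq F] (f : F → F) :
    ∃ t : F, (Fintype.card F : ℝ) / 2 <
      (Finset.image (fun x => f x + t * x) Finset.univ).card := by
  classical
  set q := Fintype.card F with hq
  have hq1 : 1 ≤ q := Fintype.card_pos
  -- collision counts
  set C : F → ℕ := fun t =>
    ((univ : Finset F).offDiag.filter
      (fun p => f p.1 + t * p.1 = f p.2 + t * p.2)).card with hC
  have hsum : ∑ t : F, C t = q * q - q := by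
    have : ∑ t : F, C t = (univ : Finset F).offDiag.card := by
      simp only [hC, card_filter]
      rw [Finset.sum_comm]
      rw [← Finset.sum_attach ((univ : Finset F).offDiag)
        (fun p => ∑ t : F, if f p.1 + t * p.1 = f p.2 + t * p.2 then 1 else 0)]
      have : ∀ p : (univ : Finset F).offDiag,
          (∑ t : F, if f (p : F × F).1 + t * (p : F × F).1
            = f (p : F × F).2 + t * (p : F × F).2 then 1 else 0) = 1 := by
        intro p
        have hne : (p : F × F).1 ≠ (p : F × F).2 := (Finset.mem_offDiag.mp p.2).2.2
        rw [← card_filter]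
        exact filter_t_card_one f hne
      rw [Finset.sum_congr rfl (fun p _ => this p)]
      simp
    rw [this, Finset.offDiag_card]
    simp [hq]
  -- pigeonhole
  obtain ⟨t, -, ht⟩ : ∃ t ∈ (univ : Finset F), C t ≤ q - 1 := by
    apply Finset.exists_le_of_sum_le Finset.univ_nonempty
    rw [hsum, Finset.sum_const, Finset.card_univ, ← hq, smul_eq_mul,
      Nat.mul_sub_one]
  refine ⟨t, ?_⟩
  set g : F → F := fun x => f x + t * x with hg
  set S : Finset F := Finset.image g univ with hS
  set n : F → ℕ := fun s => (univ.filter (fun x => g x = s)).card with hn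
  have hfib : ∑ s ∈ S, n s = q := by
    rw [← Finset.card_eq_sum_card_image g univ, card_univ]
  -- sum of squares
  have hDset : S.biUnion (fun s => (univ.filter (fun x => g x = s)) ×ˢ
        (univ.filter (fun x => g x = s)))
      = ((univ : Finset F) ×ˢ univ).filter (fun p => g p.1 = g p.2) := by
    ext p
    simp only [Finset.mem_biUnion, Finset.mem_product, Finset.mem_filter, mem_univ, true_and,
      hS, Finset.mem_image]
    constructor
    · rintro ⟨s, -, h1, h2⟩; rw [h1, h2]
    · intro h; exact ⟨g p.1, ⟨p.1, by simp⟩, rfl, h.symm⟩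
  have hsq : ∑ s ∈ S, n s * n s
      = (((univ : Finset F) ×ˢ univ).filter (fun p => g p.1 = g p.2)).card := by
    rw [← hDset, Finset.card_biUnion]
    · apply Finset.sum_congr rfl
      intro s _
      rw [Finset.card_product]
    · intro a _ b _ hab
      simp only [Finset.disjoint_left]
      rintro p hp hp'
      simp only [Finset.mem_product, Finset.mem_filter] at hp hp'
      exact hab (hp.1.2 ▸ hp'.1.2)
  -- split diag / off-diag
  have hsplit : (((univ : Finset F) ×ˢ univ).filter (fun p => g p.1 = g p.2)).card
      ≤ q + C t := by
    have := Finset.card_filter_add_card_filter_not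
      (s := ((univ : Finset F) ×ˢ univ).filter (fun p => g p.1 = g p.2))
      (p := fun p => p.1 = p.2)
    have h1 : ((((univ : Finset F) ×ˢ univ).filter (fun p => g p.1 = g p.2)).filter
        (fun p => p.1 = p.2)).card ≤ q := by
      calc _ ≤ ((univ : Finset F).diag).card := by
              apply Finset.card_le_card
              intro p hp
              simp only [Finset.mem_filter] at hp
              simp [Finset.mem_diag, hp.2]
           _ = q := by rw [Finset.diag_card, card_univ]
    have h2 : ((((univ : Finset F) ×ˢ univ).filter (fun p => g p.1 = g p.2)).filter
        (fun p => ¬ p.1 = p.2)).card ≤ C t := by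
      apply Finset.card_le_card
      intro p hp
      simp only [Finset.mem_filter, Finset.mem_product, mem_univ] at hp
      simp only [hC, Finset.mem_filter, Finset.mem_offDiag, mem_univ, hg]
      exact ⟨⟨trivial, trivial, hp.2⟩, hp.1.2⟩
    omega
  have hkey : q * q ≤ S.card * (2 * q - 1) := by
    have hct : ∑ s ∈ S, n s * n s ≤ 2 * q - 1 := by
      calc ∑ s ∈ S, n s * n s ≤ q + C t := hsq ▸ hsplit
        _ ≤ q + (q - 1) := by omega
        _ = 2 * q - 1 := by omega
    have hCS : ((q : ℝ)) ^ 2 ≤ (S.card : ℝ) * ∑ s ∈ S, ((n s : ℝ)) ^ 2 := by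
      have := sq_sum_le_card_mul_sum_sq (s := S) (f := fun s => (n s : ℝ))
      rw [← Nat.cast_sum, hfib] at this
      exact this
    have : ((q : ℝ)) ^ 2 ≤ (S.card : ℝ) * ((2 * q - 1 : ℕ) : ℝ) := by
      refine hCS.trans ?_
      have : (∑ s ∈ S, ((n s : ℝ)) ^ 2) ≤ ((2 * q - 1 : ℕ) : ℝ) := by
        have : (∑ s ∈ S, ((n s : ℝ)) ^ 2) = ((∑ s ∈ S, n s * n s : ℕ) : ℝ) := by
          rw [Nat.cast_sum]
          exact Finset.sum_congr rfl fun x _ => by push_cast; ring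
        rw [this]
        exact_mod_cast hct
      nlinarith [Nat.cast_nonneg (α := ℝ) S.card]
    have := this
    rw [← Nat.cast_pow] at this
    have h' : (q ^ 2 : ℕ) ≤ S.card * (2 * q - 1) := by exact_mod_cast this
    calc q * q = q ^ 2 := by ring
      _ ≤ _ := h'
  have hm : 0 < S.card := by
    apply Finset.card_pos.mpr
    exact ⟨g (Classical.arbitrary F), Finset.mem_image_of_mem g (mem_univ _)⟩
  have : q * q < 2 * (S.card * q) := by
    calc q * q ≤ S.card * (2 * q - 1) := hkey
      _ < S.card * (2 * q) := by
          exact Nat.mul_lt_mul_of_pos_left (by omega) hm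
      _ = 2 * (S.card * q) := by ring
  have hqlt : q < 2 * S.card := by
    have := Nat.lt_of_mul_lt_mul_right (a := q) (by linarith [this] : q * q < (2 * S.card) * q)
    exact this
  rw [div_lt_iff₀ (by norm_num : (0:ℝ) < 2)]
  calc (q : ℝ) < ((2 * S.card : ℕ) : ℝ) := by exact_mod_cast hqlt
    _ = (S.card : ℝ) * 2 := by push_cast; ring
end

section
/- Let {e₁,...,eₙ} be a basis of F_q^n, let A be the set of vectors all of whose coordinates (in this basis) are nonzero, and B the set of vectors all of whose coordinates lie in {0,1}. Then K := A ∪ B is a rank-1 Kakeya set in F_q^n, and |K| = (q-1)^n + 2^n - 1. -/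
theorem missing_digit_kakeya {F : Type} [Field F] [Fintype F] (n : ℕ) (hn : 1 ≤ n)
    (b : Module.Basis (Fin n) F (Fin n → F)) (A B : Set (Fin n → F))
    (hA : A = {v | ∀ i, b.repr v i ≠ 0})
    (hB : B = {v | ∀ i, b.repr v i = 0 ∨ b.repr v i = 1}) :
    (∀ d : Fin n → F, d ≠ 0 → ∃ v : Fin n → F, ∀ t : F, v + t • d ∈ A ∪ B) ∧
      (A ∪ B).ncard = (Fintype.card F - 1) ^ n + 2 ^ n - 1 := by
  classical
  constructor
  · intro d hd
    set g : Fin n → F := fun i => if b.repr d i = 0 then 1 else 0 with hg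
    refine ⟨b.repr.symm (Finsupp.equivFunOnFinite.symm g), fun t => ?_⟩
    by_cases ht : t = 0
    · right
      rw [hB]
      intro i
      simp [ht, g]
      by_cases h : b.repr d i = 0 <;> simp [h]
    · left
      rw [hA]
      intro i
      rw [map_add, map_smul]
      simp only [LinearEquiv.apply_symm_apply, Finsupp.coe_add, Finsupp.coe_smul,
        Pi.add_apply, Pi.smul_apply, smul_eq_mul]
      show g i + t * b.repr d i ≠ 0
      by_cases h : b.repr d i = 0 <;> simp [g, h, ht]
  · -- cardinality
    have one_ne : (1 : F) ≠ 0 := one_ne_zero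
    set e : (Fin n → F) ≃ (Fin n → F) := b.equivFun.toEquiv with he
    have hrepr : ∀ v i, e v i = b.repr v i := fun v i => rfl
    set A' : Set (Fin n → F) := {f | ∀ i, f i ≠ 0} with hA'
    set B' : Set (Fin n → F) := {f | ∀ i, f i = 0 ∨ f i = 1} with hB'
    have hAe : A = e ⁻¹' A' := by
      rw [hA]; ext v; simp [hA', hrepr]
    have hBe : B = e ⁻¹' B' := by
      rw [hB]; ext v; simp [hB', hrepr]
    have hpre : ∀ s : Set (Fin n → F), (e ⁻¹' s).ncard = s.ncard := by
      intro s
      rw [Set.ncard_eq_toFinset_card', Set.ncard_eq_toFinset_card']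
      apply Finset.card_bij (fun a _ => e a)
      · intro a ha; simpa using (by simpa using ha : a ∈ e ⁻¹' s)
      · intro a _ b _ hab; exact e.injective hab
      · intro c hc; exact ⟨e.symm c, by simpa using hc, by simp⟩
    have cardA' : A'.ncard = (Fintype.card F - 1) ^ n := by
      rw [Set.ncard_eq_toFinset_card', Set.toFinset_setOf]
      have : (Finset.univ.filter (fun f : Fin n → F => ∀ i, f i ≠ 0)).card
          = Fintype.card {f : Fin n → F // ∀ i, f i ≠ 0} := by
        rw [Fintype.card_subtype]
      rw [this, Fintype.card_congr (Equiv.subtypePiEquivPi (p := fun _ x => x ≠ 0)),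
        Fintype.card_pi]
      simp [Fintype.card_subtype_compl, Fintype.card_subtype_eq (0 : F)]
    have cardB' : B'.ncard = 2 ^ n := by
      rw [Set.ncard_eq_toFinset_card', Set.toFinset_setOf]
      have : (Finset.univ.filter (fun f : Fin n → F => ∀ i, f i = 0 ∨ f i = 1)).card
          = Fintype.card {f : Fin n → F // ∀ i, f i = 0 ∨ f i = 1} := by
        rw [Fintype.card_subtype]
      rw [this, Fintype.card_congr (Equiv.subtypePiEquivPi (p := fun _ x => x = 0 ∨ x = 1)),
        Fintype.card_pi]
      have h2 : Fintype.card {x : F // x = 0 ∨ x = 1} = 2 := by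
        rw [Fintype.card_subtype]
        have : Finset.univ.filter (fun x : F => x = 0 ∨ x = 1) = {0, 1} := by
          ext x; simp
        rw [this, Finset.card_insert_of_notMem (by simp [one_ne.symm]),
          Finset.card_singleton]
      simp [h2]
    have cardAB' : (A' ∩ B').ncard = 1 := by
      have : A' ∩ B' = {fun _ => 1} := by
        ext f
        constructor
        · rintro ⟨h1, h2⟩
          funext i
          rcases h2 i with h | h
          · exact absurd h (h1 i)
          · exact h
        · rintro rfl
          exact ⟨fun i => one_ne, fun i => Or.inr rfl⟩
      rw [this, Set.ncard_singleton]
    have key := Set.ncard_union_add_ncard_inter A' B' (Set.toFinite _) (Set.toFinite _)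
    have hun : (A ∪ B).ncard = (A' ∪ B').ncard := by
      rw [hAe, hBe, ← Set.preimage_union, hpre]
    rw [cardA', cardB', cardAB'] at key
    rw [hun]
    omega
end

section
/- Let q be a prime power and n, k ≥ 1 integers with k ≤ q^n. There exists a set U ⊆ F_q^n of size exactly (1 - (1 - q^(-⌊n/k⌋))^k) · q^n such that U contains a translate of every k-element subset of F_q^n. -/
theorem universal_set_construction {F : Type} [Field F] [Fintype F]
    (n k : ℕ) (hn : 1 ≤ n) (hk : 1 ≤ k) (hkq : k ≤ Fintype.card F ^ n) :
    ∃ U : Finset (Fin n → F),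
      (U.card : ℝ) =
        (1 - (1 - ((Fintype.card F : ℝ))⁻¹ ^ (n / k)) ^ k) * (Fintype.card F : ℝ) ^ n ∧
      ∀ S : Finset (Fin n → F), S.card = k → ∃ b : Fin n → F, ∀ a ∈ S, b + a ∈ U := by
  classical
  set q := Fintype.card F with hq
  set m := n / k with hm
  have hkm : k * m ≤ n := by
    rw [hm, mul_comm]
    exact Nat.div_mul_le_self n k
  have hsum : k * m + (n - k * m) = n := Nat.add_sub_cancel' hkm
  set r := n - k * m with hr
  -- the coordinate-splitting equivalence
  let σ : Fin n ≃ (Fin k × Fin m) ⊕ Fin r :=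
    ((finCongr hsum.symm).trans finSumFinEquiv.symm).trans
      (Equiv.sumCongr finProdFinEquiv.symm (Equiv.refl _))
  let e : (Fin n → F) ≃ ((Fin k → Fin m → F) × (Fin r → F)) :=
    ((Equiv.arrowCongr σ (Equiv.refl F)).trans
      (Equiv.sumArrowEquivProdArrow _ _ F)).trans
      (Equiv.prodCongr (Equiv.curry _ _ _) (Equiv.refl _))
  have he1 : ∀ (v : Fin n → F) (i : Fin k) (j : Fin m),
      (e v).1 i j = v (σ.symm (Sum.inl (i, j))) := fun _ _ _ => rfl
  let A : Finset (Fin k → Fin m → F) :=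
    Finset.univ.filter (fun f => ∃ i, f i = 0)
  let U' : Finset ((Fin k → Fin m → F) × (Fin r → F)) := A ×ˢ Finset.univ
  refine ⟨U'.map e.symm.toEmbedding, ?_, ?_⟩
  · -- cardinality
    have hq2 : 2 ≤ q := Fintype.one_lt_card
    have hq0 : (0 : ℝ) < (q : ℝ) := by positivity
    have hqm1 : 1 ≤ q ^ m := Nat.one_le_pow _ _ (by omega)
    have hAc : (Finset.univ.filter (fun f : Fin k → Fin m → F => ¬ ∃ i, f i = 0)).card
        = (q ^ m - 1) ^ k := by
      rw [← Fintype.card_subtype]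
      have heq : {f : Fin k → Fin m → F // ¬ ∃ i, f i = 0}
          ≃ (Fin k → {g : Fin m → F // g ≠ 0}) := by
        refine Equiv.trans ?_ (Equiv.subtypePiEquivPi (p := fun _ g => g ≠ 0))
        exact Equiv.subtypeEquivRight (by intro f; push_neg; rfl)
      rw [Fintype.card_congr heq, Fintype.card_pi]
      have hone : Fintype.card {g : Fin m → F // g ≠ 0} = q ^ m - 1 := by
        have h2 := Fintype.card_subtype_compl (fun g : Fin m → F => g = 0)
        simpa [Fintype.card_subtype_eq, Fintype.card_fun, hq] using h2
      simp [hone, Finset.prod_const]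
    have hA : A.card = q ^ (k * m) - (q ^ m - 1) ^ k := by
      have h := Finset.card_filter_add_card_filter_not
        (s := (Finset.univ : Finset (Fin k → Fin m → F))) (fun f => ∃ i, f i = 0)
      have hcardfun : (Finset.univ : Finset (Fin k → Fin m → F)).card = q ^ (k * m) := by
        rw [Finset.card_univ, Fintype.card_fun, Fintype.card_fun, Fintype.card_fin,
          Fintype.card_fin, ← pow_mul, mul_comm, ← hq]
      rw [hAc, hcardfun] at h
      exact Nat.eq_sub_of_add_eq h
    have hU : (U'.map e.symm.toEmbedding).card
        = (q ^ (k * m) - (q ^ m - 1) ^ k) * q ^ r := by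
      rw [Finset.card_map]
      have : U'.card = A.card * (Finset.univ : Finset (Fin r → F)).card :=
        Finset.card_product _ _
      rw [this, hA, Finset.card_univ, Fintype.card_fun, Fintype.card_fin]
    rw [hU]
    -- now the real-number identity
    have hle : (q ^ m - 1) ^ k ≤ q ^ (k * m) := by
      calc (q ^ m - 1) ^ k ≤ (q ^ m) ^ k := Nat.pow_le_pow_left (Nat.sub_le _ _) k
        _ = q ^ (k * m) := by rw [← pow_mul, mul_comm]
    push_cast [Nat.cast_sub hle, Nat.cast_sub hqm1]
    have hqm0 : ((q : ℝ) ^ m) ≠ 0 := by positivity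
    have h1 : (1 : ℝ) - ((q : ℝ))⁻¹ ^ m = ((q : ℝ) ^ m - 1) / (q : ℝ) ^ m := by
      field_simp
      rw [sub_mul, one_mul, one_div, inv_pow, inv_mul_cancel₀ hqm0]
    rw [h1, div_pow]
    have hqn : ((q : ℝ)) ^ n = (q : ℝ) ^ (k * m) * (q : ℝ) ^ r := by
      rw [← pow_add, hsum]
    have hmk : ((q : ℝ) ^ m) ^ k = (q : ℝ) ^ (k * m) := by
      rw [← pow_mul, mul_comm]
    rw [hmk, hqn]
    have hqkm0 : ((q : ℝ) ^ (k * m)) ≠ 0 := by positivity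
    field_simp
  · -- universality
    intro S hS
    let ea : Fin k ≃ {x // x ∈ S} := (S.equivFinOfCardEq hS).symm
    let a : Fin k → (Fin n → F) := fun i => (ea i : Fin n → F)
    set b : Fin n → F := fun x => Sum.elim (fun p => -(a p.1 x)) (fun _ => 0) (σ x) with hb
    refine ⟨b, ?_⟩
    intro s hs
    rw [Finset.mem_map_equiv]
    simp only [Equiv.symm_symm]
    have : e (b + s) ∈ U' := by
      rw [Finset.mem_product]
      constructor
      · simp only [A, Finset.mem_filter, Finset.mem_univ, true_and]
        refine ⟨ea.symm ⟨s, hs⟩, ?_⟩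
        funext j
        rw [he1]
        set i := ea.symm ⟨s, hs⟩
        have hai : a i = s := by simp [a, i]
        have hσ : σ (σ.symm (Sum.inl (i, j))) = Sum.inl (i, j) := σ.apply_symm_apply _
        show b (σ.symm (Sum.inl (i, j))) + s (σ.symm (Sum.inl (i, j))) = 0
        rw [hb]
        simp only
        rw [hσ]
        simp [hai]
      · exact Finset.mem_univ _
    exact this
end

section
/- Write F_q^n = V₀ ⊕ V₁ ⊕ ... ⊕ V_k with dim Vᵢ = m for i = 1,...,k, and let πᵢ be the projection onto Vᵢ. Then U := {u ∈ F_q^n : πᵢ(u) = 0 for at least one index 1 ≤ i ≤ k} contains a translate of every k-element subset of F_q^n. -/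
theorem universal_set_from_projections {F : Type} [Field F] [Fintype F]
    (n k m : ℕ) (hk : 1 ≤ k) (hm : 1 ≤ m) (hkm : k * m ≤ n)
    (π : Fin (k + 1) → (Fin n → F) →ₗ[F] (Fin n → F))
    (hsum : ∀ v : Fin n → F, ∑ i, π i v = v)
    (horth : ∀ i j, i ≠ j → ∀ v : Fin n → F, π i (π j v) = 0)
    (hdim : ∀ i, i ≠ 0 → Module.finrank F (LinearMap.range (π i)) = m)
    (U : Set (Fin n → F))
    (hU : U = {u | ∃ i : Fin (k + 1), i ≠ 0 ∧ π i u = 0}) :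
    ∀ S : Finset (Fin n → F), S.card = k → ∃ b : Fin n → F, ∀ a ∈ S, b + a ∈ U := by
  -- idempotence
  have hidem : ∀ i (v : Fin n → F), π i (π i v) = π i v := by
    intro i v
    have h := hsum (π i v)
    rwa [Finset.sum_eq_single i (fun j _ hj => horth j i hj v)
      (fun h => absurd (Finset.mem_univ i) h)] at h
  intro S hS
  let e : S ≃ Fin k := S.equivFinOfCardEq hS
  refine ⟨-∑ a : S, π (Fin.succ (e a)) (a : Fin n → F), ?_⟩
  intro a ha
  rw [hU]
  refine ⟨Fin.succ (e ⟨a, ha⟩), Fin.succ_ne_zero _, ?_⟩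
  rw [map_add, map_neg, map_sum]
  rw [Finset.sum_eq_single (f := fun b : S => π (Fin.succ (e ⟨a, ha⟩)) (π (Fin.succ (e b)) (b : Fin n → F))) (⟨a, ha⟩ : S)
    (fun b _ hb => horth _ _ (fun h => hb (e.injective (Fin.succ_injective _ h)).symm) _)
    (fun h => absurd (Finset.mem_univ _) h)]
  simp [hidem]
end

section
/- For n ≥ r ≥ 1 integers and q a prime power, there exists a Kakeya set K of rank r in F_q^n with |K| ≤ (1 - (1 - q^(-⌊n/q^r⌋))^(q^r)) · q^n. -/
theorem kakeya_upper_universal {F : Type} [Field F] [Fintype F] (n r : ℕ)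
    (hr : 1 ≤ r) (hrn : r ≤ n) :
    ∃ K : Finset (Fin n → F), IsKakeya F r (K : Set (Fin n → F)) ∧
      (K.card : ℝ) ≤
        (1 - (1 - ((Fintype.card F : ℝ))⁻¹ ^ (n / Fintype.card F ^ r)) ^
            (Fintype.card F ^ r)) * (Fintype.card F : ℝ) ^ n := by
  classical
  have hq1 : 1 < Fintype.card F := Fintype.one_lt_card
  set q := Fintype.card F with hqdef
  set k := q ^ r with hkdef
  have hk0 : 0 < k := pow_pos (by omega) r
  set m := n / k with hmdef
  by_cases hm0 : m = 0
  · refine ⟨Finset.univ, fun L _ => ⟨0, fun x _ => by simp⟩, ?_⟩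
    have hcu : ((Finset.univ : Finset (Fin n → F)).card : ℝ) = (q : ℝ) ^ n := by
      simp [Finset.card_univ, hqdef]
    rw [hcu, hm0]
    have hk1 : (0:ℝ) ^ k = 0 := zero_pow (by omega)
    simp [hk1]
  · -- main case : m ≥ 1
    have hm : 0 < m := Nat.pos_of_ne_zero hm0
    have hmk : m * k ≤ n := by rw [hmdef]; exact Nat.div_mul_le_self n k
    have hblock : ∀ (i : Fin k) (t : Fin m), m * i.val + t.val < m * k := by
      intro i t
      have h1 : m * i.val + t.val < m * (i.val + 1) := by rw [Nat.mul_succ]; omega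
      exact h1.trans_le (Nat.mul_le_mul_left m i.isLt)
    have hidx : ∀ (i : Fin k) (t : Fin m), m * i.val + t.val < n :=
      fun i t => lt_of_lt_of_le (hblock i t) hmk
    have hdivlt : ∀ s : ℕ, s < m * k → s / m < k := by
      intro s hs
      exact (Nat.div_lt_iff_lt_mul hm).2 (by rw [mul_comm]; exact hs)
    have hdiv : ∀ (i : Fin k) (t : Fin m), (m * i.val + t.val) / m = i.val := by
      intro i t
      rw [Nat.mul_add_div hm, Nat.div_eq_of_lt t.isLt, add_zero]
    have hmod : ∀ (i : Fin k) (t : Fin m), (m * i.val + t.val) % m = t.val := by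
      intro i t
      rw [Nat.mul_add_mod, Nat.mod_eq_of_lt t.isLt]
    set P : (Fin n → F) → Prop :=
      fun x => ∃ i : Fin k, ∀ t : Fin m, x ⟨m * i.val + t.val, hidx i t⟩ = 0 with hPdef
    set K : Finset (Fin n → F) := Finset.univ.filter P with hKdef
    refine ⟨K, ?_, ?_⟩
    · -- Kakeya property
      intro L hL
      haveI : Fintype L := Fintype.ofFinite L
      have hcard : Fintype.card L = k := by
        rw [hkdef, Module.card_eq_pow_finrank (K := F) (V := L), hL]
      have e : Fin k ≃ L := (Fintype.equivFinOfCardEq hcard).symm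
      set a : Fin k → (Fin n → F) := fun i => ((e i : L) : Fin n → F) with hadef
      set v : Fin n → F := fun s =>
        if h : s.val < m * k then -(a ⟨s.val / m, hdivlt s.val h⟩ s) else 0 with hvdef
      refine ⟨v, fun x hx => ?_⟩
      have hxK : P (v + x) := by
        obtain ⟨j, hj⟩ : ∃ j : Fin k, a j = x :=
          ⟨e.symm ⟨x, hx⟩, by simp [hadef]⟩
        refine ⟨j, fun t => ?_⟩
        have hs : m * j.val + t.val < m * k := hblock j t
        have hfin : (⟨(m * j.val + t.val) / m, hdivlt _ hs⟩ : Fin k) = j :=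
          Fin.ext (hdiv j t)
        have hv : v ⟨m * j.val + t.val, hidx j t⟩
            = -(a j ⟨m * j.val + t.val, hidx j t⟩) := by
          rw [hvdef]
          simp only [dif_pos hs]
          rw [hfin]
        rw [Pi.add_apply, hv, ← hj, neg_add_cancel]
      simp only [hKdef, Finset.coe_filter, Finset.mem_univ, true_and, Set.mem_setOf_eq]
      exact hxK
    · -- cardinality bound
      set C : Finset (Fin n → F) := Finset.univ.filter (fun x => ¬ P x) with hCdef
      have hsplit : K.card + C.card = q ^ n := by
        rw [hKdef, hCdef, Finset.card_filter_add_card_filter_not]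
        simp [Finset.card_univ, hqdef]
      set D := (q ^ m - 1) ^ k * q ^ (n - m * k) with hDdef
      have hDle : D ≤ C.card := by
        set φ : ((Fin k → {y : Fin m → F // y ≠ 0}) × (Fin (n - m * k) → F)) →
            {x : Fin n → F // ¬ P x} := fun fg =>
          ⟨fun s => if h : s.val < m * k then
              (fg.1 ⟨s.val / m, hdivlt s.val h⟩).val ⟨s.val % m, Nat.mod_lt _ hm⟩
            else fg.2 ⟨s.val - m * k, by omega⟩, by
            rintro ⟨i, hi⟩
            obtain ⟨t, ht⟩ : ∃ t : Fin m, (fg.1 i).val t ≠ 0 := by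
              by_contra hc
              push_neg at hc
              exact (fg.1 i).2 (funext hc)
            apply ht
            have hs : m * i.val + t.val < m * k := hblock i t
            have := hi t
            simp only [dif_pos hs] at this
            have h1 : (⟨(m * i.val + t.val) / m, hdivlt _ hs⟩ : Fin k) = i :=
              Fin.ext (hdiv i t)
            have h2 : (⟨(m * i.val + t.val) % m, Nat.mod_lt _ hm⟩ : Fin m) = t :=
              Fin.ext (hmod i t)
            rw [h1, h2] at this
            exact this⟩ with hφdef
        have hφinj : Function.Injective φ := by
          rintro ⟨f, g⟩ ⟨f', g'⟩ hfg
          have hfun := congrArg Subtype.val hfg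
          simp only [hφdef] at hfun
          have heval : ∀ s : Fin n, _ = _ := fun s => congrFun hfun s
          refine Prod.ext ?_ ?_
          · funext i
            apply Subtype.ext
            funext t
            have hs : m * i.val + t.val < m * k := hblock i t
            have := heval ⟨m * i.val + t.val, hidx i t⟩
            simp only [dif_pos hs] at this
            have h1 : (⟨(m * i.val + t.val) / m, hdivlt _ hs⟩ : Fin k) = i :=
              Fin.ext (hdiv i t)
            have h2 : (⟨(m * i.val + t.val) % m, Nat.mod_lt _ hm⟩ : Fin m) = t :=
              Fin.ext (hmod i t)
            rw [h1, h2] at this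
            exact this
          · funext u
            have hu : m * k + u.val < n := by
              have := u.isLt; omega
            have hns : ¬ (m * k + u.val < m * k) := by omega
            have := heval ⟨m * k + u.val, hu⟩
            simp only [dif_neg hns] at this
            have h3 : (⟨m * k + u.val - m * k, by omega⟩ : Fin (n - m * k)) = u := by
              apply Fin.ext
              show m * k + u.val - m * k = u.val
              omega
            rw [h3] at this
            exact this
        have hcard1 : Fintype.card {y : Fin m → F // y ≠ 0} = q ^ m - 1 := by
          have : Fintype.card {y : Fin m → F // ¬ (y = 0)} =
              Fintype.card (Fin m → F) - Fintype.card {y : Fin m → F // y = 0} :=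
            Fintype.card_subtype_compl _
          simpa [Fintype.card_subtype_eq, Fintype.card_fun, hqdef] using this
        have hcard2 : Fintype.card {x : Fin n → F // ¬ P x} = C.card := by
          rw [hCdef]
          exact (Fintype.card_subtype _).trans (by congr 1)
        have := Fintype.card_le_of_injective φ hφinj
        rw [Fintype.card_prod, Fintype.card_fun, Fintype.card_pi, hcard2] at this
        simp only [hcard1, Finset.prod_const, Finset.card_univ, Fintype.card_fin] at this
        calc D = (q ^ m - 1) ^ k * q ^ (n - m * k) := hDdef
          _ ≤ C.card := by
            convert this using 2 <;> simp [hqdef]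
      -- final arithmetic
      have hDq : D ≤ q ^ n := le_trans hDle (by omega)
      have hKle : K.card ≤ q ^ n - D := by omega
      have hQ0 : (0:ℝ) < (q:ℝ) := by positivity
      have hQm : ((q:ℝ) ^ m) ≠ 0 := by positivity
      have h1qm : 1 ≤ q ^ m := Nat.one_le_pow _ _ (by omega)
      have hDcast : (D : ℝ) = ((q:ℝ) ^ m - 1) ^ k * (q:ℝ) ^ (n - m * k) := by
        rw [hDdef]
        push_cast [Nat.cast_sub h1qm]
        ring
      have hpow : (q:ℝ) ^ n = (q:ℝ) ^ (m * k) * (q:ℝ) ^ (n - m * k) := by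
        rw [← pow_add]; congr 1; omega
      have key : (1 - ((q:ℝ))⁻¹ ^ m) ^ k * (q:ℝ) ^ n
          = ((q:ℝ) ^ m - 1) ^ k * (q:ℝ) ^ (n - m * k) := by
        have h1 : (1 - ((q:ℝ))⁻¹ ^ m) = ((q:ℝ) ^ m - 1) / (q:ℝ) ^ m := by
          rw [inv_pow]; field_simp
        rw [h1, div_pow, hpow, ← pow_mul]
        field_simp
      have hrhs : (1 - (1 - ((q:ℝ))⁻¹ ^ m) ^ k) * (q:ℝ) ^ n
          = (q:ℝ) ^ n - (D : ℝ) := by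
        rw [sub_mul, one_mul, key, hDcast]
      rw [hrhs]
      calc (K.card : ℝ) ≤ ((q ^ n - D : ℕ) : ℝ) := Nat.cast_le.2 hKle
        _ = (q:ℝ) ^ n - (D : ℝ) := by
          rw [Nat.cast_sub hDq]; push_cast; ring
end

section
/- For n ≥ r ≥ 1 integers and q a prime power, there exists a Kakeya set K of rank r in F_q^n with |K| < q^(n(1 - q^(-r)) + r + 1). -/
theorem kakeya_upper_universal_relaxed {F : Type} [Field F] [Fintype F] (n r : ℕ)
    (hr : 1 ≤ r) (hrn : r ≤ n) :
    ∃ K : Finset (Fin n → F), IsKakeya F r (K : Set (Fin n → F)) ∧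
      (K.card : ℝ) <
        (Fintype.card F : ℝ) ^
          ((n : ℝ) * (1 - ((Fintype.card F : ℝ))⁻¹ ^ r) + (r : ℝ) + 1) := by
  classical
  set q := Fintype.card F with hq
  have hq2 : 2 ≤ q := Fintype.one_lt_card
  set m := n / q ^ r with hm
  have hQpos : 0 < q ^ r := pow_pos (by omega) _
  -- an embedding of blocks into coordinates
  have hcard : Fintype.card ((Fin r → F) × Fin m) ≤ Fintype.card (Fin n) := by
    rw [Fintype.card_prod, Fintype.card_fun, Fintype.card_fin, Fintype.card_fin,
      Fintype.card_fin]
    calc q ^ r * m = q ^ r * (n / q ^ r) := by rw [hm]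
      _ ≤ n := Nat.mul_div_le n (q ^ r)
  obtain ⟨ι⟩ : Nonempty (((Fin r → F) × Fin m) ↪ Fin n) :=
    Function.Embedding.nonempty_of_card_le hcard
  set P : (Fin n → F) → Prop :=
    fun x => ∃ ε : Fin r → F, ∀ j : Fin m, x (ι (ε, j)) = 0 with hP
  refine ⟨Finset.univ.filter P, ?_, ?_⟩
  · -- Kakeya property
    intro L hL
    let b : Module.Basis (Fin r) F L := Module.finBasisOfFinrankEq F L hL
    set w : (Fin r → F) → (Fin n → F) :=
      fun ε => ∑ i, ε i • ((b i : L) : Fin n → F) with hw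
    set v : Fin n → F := fun k =>
      if h : ∃ p : (Fin r → F) × Fin m, ι p = k then
        -(w (Classical.choose h).1 k) else 0 with hv
    refine ⟨v, ?_⟩
    intro x hx
    set ε₀ : Fin r → F := fun i => b.repr ⟨x, hx⟩ i with hε₀
    have hxw : x = w ε₀ := by
      have h1 : (∑ i, b.repr ⟨x, hx⟩ i • b i) = (⟨x, hx⟩ : L) := b.sum_repr ⟨x, hx⟩
      calc x = ((⟨x, hx⟩ : L) : Fin n → F) := rfl
        _ = (((∑ i, b.repr ⟨x, hx⟩ i • b i : L)) : Fin n → F) := by rw [h1]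
        _ = ∑ i, b.repr ⟨x, hx⟩ i • ((b i : L) : Fin n → F) := by push_cast; rfl
        _ = w ε₀ := rfl
    have key : ∀ j : Fin m, (v + x) (ι (ε₀, j)) = 0 := by
      intro j
      have hk : ∃ p : (Fin r → F) × Fin m, ι p = ι (ε₀, j) := ⟨(ε₀, j), rfl⟩
      have hchoose : Classical.choose hk = (ε₀, j) := ι.injective (Classical.choose_spec hk)
      have hvval : v (ι (ε₀, j)) = -(w ε₀ (ι (ε₀, j))) := by
        simp only [hv]
        rw [dif_pos hk, hchoose]
      show v (ι (ε₀, j)) + x (ι (ε₀, j)) = 0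
      rw [hvval, hxw]
      ring
    simp only [Finset.coe_filter, Set.mem_setOf_eq, Finset.mem_univ, true_and]
    exact ⟨ε₀, key⟩
  · -- cardinality bound
    have hsub : Finset.univ.filter P ⊆
        Finset.univ.biUnion (fun ε : Fin r → F =>
          Finset.univ.filter (fun x : Fin n → F => ∀ j : Fin m, x (ι (ε, j)) = 0)) := by
      intro x hx
      rw [Finset.mem_filter] at hx
      obtain ⟨ε, hε⟩ := hx.2
      exact Finset.mem_biUnion.mpr ⟨ε, Finset.mem_univ _,
        Finset.mem_filter.mpr ⟨Finset.mem_univ _, hε⟩⟩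
    have hAcard : ∀ ε : Fin r → F,
        (Finset.univ.filter (fun x : Fin n → F => ∀ j : Fin m, x (ι (ε, j)) = 0)).card
          ≤ q ^ (n - m) := by
      intro ε
      set g : Fin m → Fin n := fun j => ι (ε, j) with hg
      have hginj : Function.Injective g := by
        intro a b hab
        have := ι.injective hab
        exact (Prod.mk.injEq _ _ _ _ ▸ this).2
      have hcards : Fintype.card {k : Fin n // k ∈ Set.range g} = m := by
        exact (Fintype.card_congr (Equiv.ofInjective g hginj)).symm.trans
          (Fintype.card_fin m)
      have hcardc : Fintype.card ({k : Fin n // k ∉ Set.range g} → F) = q ^ (n - m) := by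
        rw [Fintype.card_fun]
        congr 1
        rw [Fintype.card_subtype_compl, hcards, Fintype.card_fin]
      calc (Finset.univ.filter (fun x : Fin n → F => ∀ j : Fin m, x (ι (ε, j)) = 0)).card
          ≤ (Finset.univ : Finset ({k : Fin n // k ∉ Set.range g} → F)).card := by
            apply Finset.card_le_card_of_injOn
              (fun x (k : {k : Fin n // k ∉ Set.range g}) => x k.1)
            · intro x _; exact Finset.mem_univ _
            · intro x hx y hy hxy
              rw [Finset.mem_coe, Finset.mem_filter] at hx hy
              funext k
              by_cases hk : k ∈ Set.range g
              · obtain ⟨j, rfl⟩ := hk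
                rw [hx.2 j, hy.2 j]
              · exact congrFun hxy ⟨k, hk⟩
        _ = q ^ (n - m) := by rw [Finset.card_univ, hcardc]
    have hK : (Finset.univ.filter P).card ≤ q ^ r * q ^ (n - m) := by
      calc (Finset.univ.filter P).card
          ≤ (Finset.univ.biUnion (fun ε : Fin r → F =>
              Finset.univ.filter (fun x : Fin n → F => ∀ j : Fin m, x (ι (ε, j)) = 0))).card :=
            Finset.card_le_card hsub
        _ ≤ ∑ ε : Fin r → F,
              (Finset.univ.filter (fun x : Fin n → F => ∀ j : Fin m, x (ι (ε, j)) = 0)).card :=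
            Finset.card_biUnion_le
        _ ≤ ∑ _ε : Fin r → F, q ^ (n - m) := Finset.sum_le_sum (fun ε _ => hAcard ε)
        _ = q ^ r * q ^ (n - m) := by
            rw [Finset.sum_const, Finset.card_univ, Fintype.card_fun, Fintype.card_fin,
              smul_eq_mul]
    -- numeric part
    have hmn : m ≤ n := Nat.div_le_self _ _
    have hnlt : n < (m + 1) * q ^ r := by
      rw [hm]
      calc n = q ^ r * (n / q ^ r) + n % q ^ r := (Nat.div_add_mod n (q ^ r)).symm
        _ < q ^ r * (n / q ^ r) + q ^ r := Nat.add_lt_add_left (Nat.mod_lt _ hQpos) _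
        _ = (n / q ^ r + 1) * q ^ r := by ring
    have hq1R : (1 : ℝ) < (q : ℝ) := by exact_mod_cast hq2.trans_lt' one_lt_two
    have hqposR : (0 : ℝ) < (q : ℝ) ^ r := by positivity
    have hdivR : (n : ℝ) * ((q : ℝ) ^ r)⁻¹ < (m : ℝ) + 1 := by
      rw [← div_eq_mul_inv, div_lt_iff₀ hqposR]
      exact_mod_cast hnlt
    have hexp : ((r + (n - m) : ℕ) : ℝ) <
        (n : ℝ) * (1 - ((q : ℝ))⁻¹ ^ r) + (r : ℝ) + 1 := by
      rw [inv_pow]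
      push_cast [Nat.cast_sub hmn]
      nlinarith [hdivR, hqposR]
    calc ((Finset.univ.filter P).card : ℝ)
        ≤ ((q ^ r * q ^ (n - m) : ℕ) : ℝ) := by exact_mod_cast hK
      _ = (q : ℝ) ^ ((r + (n - m) : ℕ)) := by push_cast [pow_add]; ring
      _ = (q : ℝ) ^ (((r + (n - m) : ℕ) : ℝ)) := (Real.rpow_natCast _ _).symm
      _ < (q : ℝ) ^ ((n : ℝ) * (1 - ((q : ℝ))⁻¹ ^ r) + (r : ℝ) + 1) :=
          (Real.rpow_lt_rpow_left_iff hq1R).mpr hexp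
end

section
/- Let P be a non-zero polynomial in n variables over a field F that vanishes with multiplicity at least m at every point of Sⁿ, where S ⊆ F is finite. Then deg P ≥ m·|S|. -/
/-- `P` vanishes at `a` with multiplicity at least `m`: every monomial of the
shifted polynomial `P(X + a)` has total degree at least `m`. -/
def VanishesWithMult {F : Type} [CommRing F] {n : ℕ}
    (P : MvPolynomial (Fin n) F) (a : Fin n → F) (m : ℕ) : Prop :=
  ∀ d ∈ (MvPolynomial.aeval
      (fun j => MvPolynomial.X j + MvPolynomial.C (a j)) P).support,
    m ≤ d.sum fun _ e => e

open Polynomial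

namespace SZMult

variable {F : Type} [Field F]

/-- Extract the `α`-coefficient (as an `MvPolynomial` coefficient) from each coefficient of a
polynomial over `MvPolynomial`. -/
noncomputable def extract {n : ℕ} (α : Fin n →₀ ℕ)
    (g : Polynomial (MvPolynomial (Fin n) F)) : Polynomial F :=
  ⟨⟨Finsupp.mapRange (MvPolynomial.coeff α) (MvPolynomial.coeff_zero α) g.toFinsupp.coeff⟩⟩

@[simp] lemma extract_coeff {n : ℕ} (α : Fin n →₀ ℕ)
    (g : Polynomial (MvPolynomial (Fin n) F)) (i : ℕ) :
    (extract α g).coeff i = MvPolynomial.coeff α (g.coeff i) := by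
  rcases g with ⟨g⟩
  simp [extract, Polynomial.coeff_ofFinsupp, Finsupp.mapRange_apply, Polynomial.coeff]

lemma extract_hasseDeriv {n : ℕ} (α : Fin n →₀ ℕ)
    (g : Polynomial (MvPolynomial (Fin n) F)) (k : ℕ) :
    extract α (hasseDeriv k g) = hasseDeriv k (extract α g) := by
  ext i
  rw [extract_coeff, hasseDeriv_coeff, hasseDeriv_coeff, extract_coeff,
    ← map_natCast (MvPolynomial.C : F →+* MvPolynomial (Fin n) F),
    MvPolynomial.coeff_C_mul]

lemma extract_eval {n : ℕ} (α : Fin n →₀ ℕ)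
    (r : Polynomial (MvPolynomial (Fin n) F)) (s : F) :
    MvPolynomial.coeff α (Polynomial.eval (MvPolynomial.C s) r) = (extract α r).eval s := by
  have h1 : (extract α r).natDegree ≤ r.natDegree := by
    refine natDegree_le_iff_coeff_eq_zero.mpr fun N hN => ?_
    rw [extract_coeff, Polynomial.coeff_eq_zero_of_natDegree_lt hN, MvPolynomial.coeff_zero]
  rw [Polynomial.eval_eq_sum_range' (Nat.lt_succ_of_le h1) s,
    Polynomial.eval_eq_sum_range' (Nat.lt_succ_self r.natDegree) (MvPolynomial.C s),
    MvPolynomial.coeff_sum]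
  refine Finset.sum_congr rfl fun i _ => ?_
  rw [← map_pow, mul_comm, MvPolynomial.coeff_C_mul, extract_coeff, mul_comm]


lemma count_le_card [DecidableEq F] {M : Multiset F} {S : Finset F} :
    ∑ s ∈ S, M.count s ≤ Multiset.card M := by
  classical
  calc ∑ s ∈ S, M.count s ≤ ∑ s ∈ S ∪ M.toFinset, M.count s :=
        Finset.sum_le_sum_of_subset Finset.subset_union_left
    _ = ∑ s ∈ M.toFinset, M.count s := by
        refine (Finset.sum_subset Finset.subset_union_right fun x _ hx => ?_).symm
        exact Multiset.count_eq_zero_of_notMem (by simpa using hx)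
    _ = Multiset.card M := M.toFinset_sum_count_eq

lemma univariate_bound {q : Polynomial F} (hq : q ≠ 0) {S : Finset F} {k : ℕ}
    (h : ∀ s ∈ S, (X - C s) ^ k ∣ q) : k * S.card ≤ q.natDegree := by
  classical
  calc k * S.card = ∑ _s ∈ S, k := by rw [Finset.sum_const, smul_eq_mul, mul_comm]
    _ ≤ ∑ s ∈ S, q.roots.count s := Finset.sum_le_sum fun s hs => by
        rw [count_roots]; exact (le_rootMultiplicity_iff hq).2 (h s hs)
    _ ≤ Multiset.card q.roots := count_le_card
    _ ≤ q.natDegree := card_roots' q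


lemma finSuccEquiv_C (n : ℕ) (c : F) :
    MvPolynomial.finSuccEquiv F n (MvPolynomial.C c) = Polynomial.C (MvPolynomial.C c) := by
  simp [MvPolynomial.finSuccEquiv_apply]

lemma key_identity {n : ℕ} (a' : Fin n → F) (s : F) (P : MvPolynomial (Fin (n + 1)) F) :
    MvPolynomial.finSuccEquiv F n
        (MvPolynomial.aeval (fun j => MvPolynomial.X j + MvPolynomial.C (Fin.cons s a' j)) P)
      = taylor (MvPolynomial.C s)
          (Polynomial.map
            ((MvPolynomial.aeval (fun j => MvPolynomial.X j + MvPolynomial.C (a' j)) :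
              MvPolynomial (Fin n) F →ₐ[F] MvPolynomial (Fin n) F) : _ →+* _)
            (MvPolynomial.finSuccEquiv F n P)) := by
  induction P using MvPolynomial.induction_on with
  | C c =>
      simp [taylor_apply, MvPolynomial.aeval_C, finSuccEquiv_C, Polynomial.map_C, MvPolynomial.aeval_C]
  | add p q hp hq =>
      simp only [map_add, Polynomial.map_add, taylor_apply, add_comp] at *
      rw [hp, hq]
  | mul_X p i hp =>
      rw [map_mul, map_mul, map_mul, Polynomial.map_mul, taylor_apply, mul_comp,
        ← taylor_apply, ← taylor_apply, hp]
      refine congrArg (fun x : Polynomial (MvPolynomial (Fin n) F) => _ * x) ?_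
      refine Fin.cases ?_ (fun j => ?_) i
      · simp [taylor_apply, MvPolynomial.finSuccEquiv_X_zero, finSuccEquiv_C]
      · simp [taylor_apply, MvPolynomial.finSuccEquiv_X_succ, MvPolynomial.aeval_X, finSuccEquiv_C]



theorem aux (n : ℕ) : ∀ (m : ℕ) (P : MvPolynomial (Fin n) F), P ≠ 0 →
    ∀ (S : Finset F), S.Nonempty →
    (∀ a : Fin n → F, (∀ j, a j ∈ S) →
      ∀ d ∈ (MvPolynomial.aeval
          (fun j => MvPolynomial.X j + MvPolynomial.C (a j)) P).support,
        m ≤ d.sum fun _ e => e) →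
    m * S.card ≤ P.totalDegree := by
  induction n with
  | zero =>
    intro m P hP S hS hvan
    have hσ : (MvPolynomial.aeval
        (fun j : Fin 0 => MvPolynomial.X j + MvPolynomial.C (Fin.elim0 j)) P) = P := by
      have h : (MvPolynomial.aeval
          (fun j : Fin 0 => MvPolynomial.X j + MvPolynomial.C (Fin.elim0 j)) :
            MvPolynomial (Fin 0) F →ₐ[F] MvPolynomial (Fin 0) F) = AlgHom.id F _ := by
        apply MvPolynomial.algHom_ext; intro i; exact i.elim0
      exact congrFun (congrArg DFunLike.coe h) P
    obtain ⟨d, hd⟩ := MvPolynomial.support_nonempty.mpr hP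
    have hm := hvan Fin.elim0 (fun j => j.elim0) d (by rw [hσ]; exact hd)
    have hd0 : d = 0 := Subsingleton.elim d 0
    rw [hd0, Finsupp.sum_zero_index] at hm
    have : m = 0 := Nat.le_zero.mp hm
    simp [this]
  | succ n IH =>
    intro m P hP S hS hvan
    have hcard : 0 < S.card := hS.card_pos
    set f := MvPolynomial.finSuccEquiv F n P with hfdef
    have hf : f ≠ 0 := by
      intro h
      apply hP
      have := congrArg (MvPolynomial.finSuccEquiv F n).symm h
      simpa [hfdef] using this
    set t := f.natDegree with htdef
    set Pt := f.coeff t with hPtdef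
    have hPt : Pt ≠ 0 := by
      have := Polynomial.leadingCoeff_ne_zero.mpr hf
      rwa [Polynomial.leadingCoeff] at this
    -- key pointwise claim
    have key : ∀ a' : Fin n → F, (∀ j, a' j ∈ S) →
        ∀ β ∈ (MvPolynomial.aeval
            (fun j => MvPolynomial.X j + MvPolynomial.C (a' j)) Pt).support,
          m - t / S.card ≤ β.sum fun _ e => e := by
      intro a' ha'
      set σ' := (MvPolynomial.aeval
          (fun j => MvPolynomial.X j + MvPolynomial.C (a' j)) :
            MvPolynomial (Fin n) F →ₐ[F] MvPolynomial (Fin n) F) with hσ'def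
      have hσ'inj : Function.Injective σ' := by
        have hcomp : ((MvPolynomial.aeval
            (fun j => MvPolynomial.X j - MvPolynomial.C (a' j)) :
              MvPolynomial (Fin n) F →ₐ[F] _).comp σ') = AlgHom.id F _ := by
          apply MvPolynomial.algHom_ext; intro i
          simp [hσ'def]
        intro x y hxy
        have hx := DFunLike.congr_fun hcomp x
        have hy := DFunLike.congr_fun hcomp y
        simp only [AlgHom.comp_apply, AlgHom.id_apply] at hx hy
        rw [← hx, ← hy, hxy]
      have hσPt : σ' Pt ≠ 0 := fun h => hPt (hσ'inj (by simpa using h))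
      obtain ⟨α, hαmem, hαmin⟩ := Finset.exists_min_image _
        (fun d => d.sum fun _ e => e) (MvPolynomial.support_nonempty.mpr hσPt)
      set w := α.sum fun _ e => e with hwdef
      set g := Polynomial.map (σ' : MvPolynomial (Fin n) F →+* MvPolynomial (Fin n) F) f
        with hgdef
      set q := extract α g with hqdef
      have hqcoeff : ∀ i, q.coeff i = MvPolynomial.coeff α (σ' (f.coeff i)) := by
        intro i; rw [hqdef, extract_coeff, hgdef, Polynomial.coeff_map]; rfl
      have hqt : q.coeff t ≠ 0 := by
        rw [hqcoeff]
        exact MvPolynomial.mem_support_iff.mp hαmem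
      have hq0 : q ≠ 0 := fun h => hqt (by rw [h]; simp)
      have hqdeg : q.natDegree ≤ t := by
        refine natDegree_le_iff_coeff_eq_zero.mpr fun N hN => ?_
        rw [hqcoeff, Polynomial.coeff_eq_zero_of_natDegree_lt hN]
        simp
      set e := m - w with hedef
      have hdvd : ∀ s ∈ S, (X - C s) ^ e ∣ q := by
        intro s hs
        have htay : ∀ j < e, (taylor s q).coeff j = 0 := by
          intro j hj
          have h1 : (taylor s q).coeff j =
              MvPolynomial.coeff α ((taylor (MvPolynomial.C s) g).coeff j) := by
            rw [taylor_coeff, taylor_coeff, extract_eval, extract_hasseDeriv, hqdef]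
          have h2 : taylor (MvPolynomial.C s) g = MvPolynomial.finSuccEquiv F n
              (MvPolynomial.aeval
                (fun j => MvPolynomial.X j + MvPolynomial.C (Fin.cons s a' j)) P) := by
            rw [key_identity a' s P, hgdef, hσ'def, hfdef]
          rw [h1, h2]
          by_contra hne
          have hmem : Finsupp.cons j α ∈ ((MvPolynomial.aeval
              (fun j => MvPolynomial.X j + MvPolynomial.C (Fin.cons s a' j)) P :
                MvPolynomial (Fin (n+1)) F)).support :=
            MvPolynomial.mem_support_coeff_finSuccEquiv.mp (MvPolynomial.mem_support_iff.mpr hne)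
          have hsum := hvan (Fin.cons s a')
            (fun j => Fin.cases hs (fun j' => ha' j') j) _ hmem
          rw [Finsupp.sum_cons] at hsum
          omega
        have hX : X ^ e ∣ taylor s q := X_pow_dvd_iff.mpr htay
        obtain ⟨c, hc⟩ := hX
        have hL : (taylor s q).comp (X - C s) = q := by
          rw [taylor_apply, comp_assoc]
          simp [add_comp, sub_add_cancel]
        refine ⟨c.comp (X - C s), ?_⟩
        rw [← hL, hc, mul_comp, X_pow_comp]
      have hbound : e * S.card ≤ t :=
        le_trans (univariate_bound hq0 hdvd) hqdeg
      have hw : m - t / S.card ≤ w := by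
        have h3 : e ≤ t / S.card := (Nat.le_div_iff_mul_le hcard).mpr hbound
        omega
      intro β hβ
      exact le_trans hw (hαmin β hβ)
    have hIH : (m - t / S.card) * S.card ≤ Pt.totalDegree :=
      IH (m - t / S.card) Pt hPt S hS key
    have hdeg : Pt.totalDegree + t ≤ P.totalDegree :=
      MvPolynomial.totalDegree_coeff_finSuccEquiv_add_le P t hPt
    have h4 : t / S.card * S.card ≤ t := Nat.div_mul_le_self t S.card
    calc m * S.card ≤ (m - t / S.card + t / S.card) * S.card :=
          Nat.mul_le_mul_right _ (by omega)
      _ = (m - t / S.card) * S.card + t / S.card * S.card := Nat.add_mul _ _ _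
      _ ≤ Pt.totalDegree + t := Nat.add_le_add hIH h4
      _ ≤ P.totalDegree := hdeg

end SZMult

theorem schwartz_zippel_corollary {F : Type} [Field F] (n m : ℕ) (hn : 1 ≤ n)
    (P : MvPolynomial (Fin n) F) (hP : P ≠ 0) (S : Finset F) (hS : S.Nonempty)
    (hvan : ∀ a : Fin n → F, (∀ j, a j ∈ S) → VanishesWithMult P a m) :
    m * S.card ≤ P.totalDegree := by
  exact SZMult.aux n m P hP S hS (fun a ha => hvan a ha)
end

section
/- Let P be a non-zero polynomial in n variables over a field F, let b, d₁,...,d_r ∈ Fⁿ, and let t₁,...,t_r ∈ F. Then the multiplicity of the r-variable polynomial Q(T₁,...,T_r) := P(b + T₁d₁ + ... + T_r d_r) at the point (t₁,...,t_r) is at least the multiplicity of P at b + t₁d₁ + ... + t_r d_r. -/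
open MvPolynomial

lemma aux_hom {F : Type} [CommRing F] {n r m : ℕ}
    (L : Fin n → MvPolynomial (Fin r) F) (hL : ∀ j, (L j).IsHomogeneous 1)
    (R : MvPolynomial (Fin n) F)
    (hR : ∀ e ∈ R.support, m ≤ e.sum fun _ x => x) :
    ∀ u ∈ (MvPolynomial.aeval L R).support, m ≤ u.sum fun _ x => x := by
  intro u hu
  rw [MvPolynomial.mem_support_iff] at hu
  rw [R.as_sum, map_sum] at hu
  rw [MvPolynomial.coeff_sum] at hu
  obtain ⟨e, he, hne⟩ := Finset.exists_ne_zero_of_sum_ne_zero hu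
  have hhom : (MvPolynomial.aeval L (MvPolynomial.monomial e (MvPolynomial.coeff e R))).IsHomogeneous
      (1 * (e.sum fun _ x => x)) := by
    apply MvPolynomial.IsHomogeneous.aeval _ _ hL
    exact MvPolynomial.isHomogeneous_monomial _ rfl
  rw [one_mul] at hhom
  have : u.degree = e.sum fun _ x => x := by
    by_contra hd
    exact hne (hhom.coeff_eq_zero hd)
  have hdeg : u.degree = u.sum fun _ x => x := rfl
  rw [hdeg] at this
  rw [this]
  exact hR e he

theorem multiplicity_of_composition {F : Type} [Field F] (n r : ℕ)
    (hn : 1 ≤ n) (hr : 1 ≤ r)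
    (P : MvPolynomial (Fin n) F) (hP : P ≠ 0)
    (b : Fin n → F) (d : Fin r → Fin n → F) (t : Fin r → F)
    (Q : MvPolynomial (Fin r) F)
    (hQ : Q = MvPolynomial.aeval
      (fun j => MvPolynomial.C (b j) +
        ∑ s : Fin r, MvPolynomial.C (d s j) * MvPolynomial.X s) P) :
    ∀ m : ℕ, VanishesWithMult P (fun j => b j + ∑ s : Fin r, t s * d s j) m →
      VanishesWithMult Q t m := by
  intro m hm
  subst hQ
  intro u hu
  set a : Fin n → F := fun j => b j + ∑ s : Fin r, t s * d s j with ha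
  set L : Fin n → MvPolynomial (Fin r) F :=
    fun j => ∑ s : Fin r, MvPolynomial.C (d s j) * MvPolynomial.X s with hLdef
  set R := MvPolynomial.aeval (fun j => MvPolynomial.X j + MvPolynomial.C (a j)) P with hRdef
  have hL : ∀ j, (L j).IsHomogeneous 1 := by
    intro j
    exact MvPolynomial.IsHomogeneous.sum _ _ _ fun s _ =>
      MvPolynomial.isHomogeneous_C_mul_X _ _
  have key : MvPolynomial.aeval (fun s => MvPolynomial.X s + MvPolynomial.C (t s))
      (MvPolynomial.aeval (fun j => MvPolynomial.C (b j) +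
        ∑ s : Fin r, MvPolynomial.C (d s j) * MvPolynomial.X s) P)
      = MvPolynomial.aeval L R := by
    rw [hRdef, ← AlgHom.comp_apply, ← AlgHom.comp_apply, MvPolynomial.comp_aeval,
      MvPolynomial.comp_aeval]
    have hfun : (fun i => MvPolynomial.aeval (fun s => MvPolynomial.X s + MvPolynomial.C (t s))
          (MvPolynomial.C (b i) + ∑ s : Fin r, MvPolynomial.C (d s i) * MvPolynomial.X s))
        = fun i => MvPolynomial.aeval L (MvPolynomial.X i + MvPolynomial.C (a i)) := by
      funext j
      simp only [hLdef, ha, map_add, map_sum, map_mul, MvPolynomial.aeval_X,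
      MvPolynomial.aeval_C, MvPolynomial.C_add, MvPolynomial.C_mul, mul_add,
      Finset.sum_add_distrib]
      ring_nf
      simp [mul_comm]
    rw [hfun]
  rw [key] at hu
  exact aux_hom L hL R hm u hu
end

section
/- Let P be a non-zero polynomial in n variables over a field F, a ∈ Fⁿ, and i ∈ ℕ₀ⁿ a multi-index. Then the multiplicity of the Hasse derivative P^(i) at a satisfies μ(P^(i), a) ≥ μ(P, a) − ‖i‖, where ‖i‖ is the total order of i. -/
/-- The Hasse derivative `P^(i)`: the coefficient of `X^i` in the expansion
`P(X + Y) = Σ_i P^(i)(Y)·X^i`. -/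
noncomputable def hasseDeriv {F : Type} [CommRing F] {n : ℕ}
    (P : MvPolynomial (Fin n) F) (i : Fin n →₀ ℕ) : MvPolynomial (Fin n) F :=
  MvPolynomial.coeff i
    (MvPolynomial.aeval
      (fun j => MvPolynomial.X j +
        MvPolynomial.C (MvPolynomial.X j) :
        Fin n → MvPolynomial (Fin n) (MvPolynomial (Fin n) F)) P)

namespace MultiplicityHasseAux

open MvPolynomial

variable {F : Type} [CommRing F] {n : ℕ}

/-- Every (outer, inner) exponent pair in the support of `R` sums to `u`. -/
def Hprop (u : Fin n →₀ ℕ) (R : MvPolynomial (Fin n) (MvPolynomial (Fin n) F)) : Prop :=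
  ∀ i d : Fin n →₀ ℕ, MvPolynomial.coeff d (MvPolynomial.coeff i R) ≠ 0 → i + d = u

lemma Hprop_mul {u v : Fin n →₀ ℕ} {p q : MvPolynomial (Fin n) (MvPolynomial (Fin n) F)}
    (hp : Hprop u p) (hq : Hprop v q) : Hprop (u + v) (p * q) := by
  intro i d h
  rw [coeff_mul, coeff_sum] at h
  obtain ⟨⟨i1, i2⟩, hi, hne⟩ := Finset.exists_ne_zero_of_sum_ne_zero h
  rw [coeff_mul] at hne
  obtain ⟨⟨d1, d2⟩, hd, hne2⟩ := Finset.exists_ne_zero_of_sum_ne_zero hne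
  have h1 : i1 + d1 = u := hp _ _ (left_ne_zero_of_mul hne2)
  have h2 : i2 + d2 = v := hq _ _ (right_ne_zero_of_mul hne2)
  rw [Finset.HasAntidiagonal.mem_antidiagonal] at hi hd
  rw [← hi, ← hd, ← h1, ← h2]
  abel

lemma Hprop_C (c : F) : Hprop 0 (MvPolynomial.C (MvPolynomial.C c) :
    MvPolynomial (Fin n) (MvPolynomial (Fin n) F)) := by
  intro i d h
  rw [coeff_C] at h
  split_ifs at h with hi
  · rw [coeff_C] at h
    split_ifs at h with hd
    · rw [← hi, ← hd, add_zero]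
    · exact absurd rfl h
  · simp at h

lemma Hprop_one : Hprop 0 (1 : MvPolynomial (Fin n) (MvPolynomial (Fin n) F)) := by
  have := Hprop_C (n := n) (1 : F)
  simpa using this

lemma Hprop_X (j : Fin n) :
    Hprop (Finsupp.single j 1)
      ((X j + C (X j) : MvPolynomial (Fin n) (MvPolynomial (Fin n) F))) := by
  intro i d h
  rw [coeff_add, coeff_X', coeff_C] at h
  split_ifs at h with h1 h2 h2
  · exfalso; rw [← h2] at h1; simp at h1
  · rw [add_zero, coeff_one] at h
    split_ifs at h with hd
    · rw [← h1, ← hd, add_zero]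
    · exact absurd rfl h
  · rw [zero_add, coeff_X'] at h
    split_ifs at h with hd
    · rw [← h2, ← hd, zero_add]
    · exact absurd rfl h
  · rw [add_zero] at h; exact absurd rfl h

lemma Hprop_pow (j : Fin n) (k : ℕ) :
    Hprop (Finsupp.single j k)
      (((X j + C (X j) : MvPolynomial (Fin n) (MvPolynomial (Fin n) F))) ^ k) := by
  induction k with
  | zero => simpa [Finsupp.single_zero] using (Hprop_one (F := F) (n := n))
  | succ k ih =>
    have h := Hprop_mul (Hprop_X (F := F) j) ih
    rw [pow_succ']
    have : Finsupp.single j 1 + Finsupp.single j k = Finsupp.single j (k + 1) := by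
      rw [← Finsupp.single_add]; congr 1; omega
    rwa [this] at h

lemma Hprop_monomial (u : Fin n →₀ ℕ) (c : F) :
    Hprop u (aeval (fun j => X j + C (X j) :
      Fin n → MvPolynomial (Fin n) (MvPolynomial (Fin n) F)) (monomial u c)) := by
  induction u using Finsupp.induction with
  | zero =>
    rw [monomial_zero', aeval_C]
    exact Hprop_C c
  | single_add j k f hjf hk ih =>
    rw [monomial_single_add, map_mul, map_pow, aeval_X]
    exact Hprop_mul (Hprop_pow j k) ih

lemma shift_comm (a : Fin n → F) (P : MvPolynomial (Fin n) F) :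
    aeval (fun j => X j + C (X j) :
        Fin n → MvPolynomial (Fin n) (MvPolynomial (Fin n) F))
      (aeval (fun j => X j + C (a j)) P)
    = MvPolynomial.map
        (((aeval (fun j => X j + C (a j)) : MvPolynomial (Fin n) F →ₐ[F] MvPolynomial (Fin n) F) :
          MvPolynomial (Fin n) F →+* MvPolynomial (Fin n) F))
        (aeval (fun j => X j + C (X j)) P) := by
  induction P using MvPolynomial.induction_on with
  | C c =>
    simp [aeval_C, MvPolynomial.algebraMap_eq]
  | add p q hp hq =>
    simp only [map_add, hp, hq]
  | mul_X p j hp =>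
    simp only [map_mul, map_add, hp, aeval_X, aeval_C, MvPolynomial.map_X,
      MvPolynomial.map_C, MvPolynomial.algebraMap_eq, add_assoc]
    rw [show ((aeval (fun j => X j + C (a j)) : MvPolynomial (Fin n) F →ₐ[F] MvPolynomial (Fin n) F) :
        MvPolynomial (Fin n) F →+* MvPolynomial (Fin n) F) (X j) = X j + C (a j) from by simp,
      map_add,
      show (algebraMap F (MvPolynomial (Fin n) (MvPolynomial (Fin n) F))) (a j)
        = C (C (a j)) from rfl]

end MultiplicityHasseAux

open MvPolynomial MultiplicityHasseAux in
theorem multiplicity_hasseDeriv {F : Type} [Field F] (n : ℕ) (hn : 1 ≤ n)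
    (P : MvPolynomial (Fin n) F) (hP : P ≠ 0) (a : Fin n → F) (i : Fin n →₀ ℕ) :
    ∀ m : ℕ, VanishesWithMult P a m →
      VanishesWithMult (hasseDeriv P i) a (m - i.sum fun _ e => e) := by
  intro m hm d hd
  rw [MvPolynomial.mem_support_iff] at hd
  set Q := aeval (fun j => X j + C (a j)) P with hQ
  have key : (aeval (fun j => X j + C (a j)) (hasseDeriv P i)) =
      MvPolynomial.coeff i (aeval (fun j => X j + C (X j) :
        Fin n → MvPolynomial (Fin n) (MvPolynomial (Fin n) F)) Q) := by
    rw [hQ, shift_comm, coeff_map]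
    rfl
  rw [key] at hd
  have hsum : (aeval (fun j => X j + C (X j) :
      Fin n → MvPolynomial (Fin n) (MvPolynomial (Fin n) F)) Q)
      = ∑ u ∈ Q.support, aeval (fun j => X j + C (X j) :
        Fin n → MvPolynomial (Fin n) (MvPolynomial (Fin n) F))
          (monomial u (MvPolynomial.coeff u Q)) := by
    rw [← map_sum]
    congr 1
    exact Q.as_sum
  rw [hsum, coeff_sum, coeff_sum] at hd
  obtain ⟨u, hu, hne⟩ := Finset.exists_ne_zero_of_sum_ne_zero hd
  have h1 : i + d = u := Hprop_monomial u (MvPolynomial.coeff u Q) i d hne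
  have h2 : m ≤ u.sum (fun _ e => e) := hm u hu
  have h3 : (i + d).sum (fun _ e => (e : ℕ)) =
      i.sum (fun _ e => e) + d.sum (fun _ e => e) :=
    Finsupp.sum_add_index' (fun _ => rfl) (fun _ _ _ => rfl)
  rw [h1] at h3
  omega
end

section
/- Let n, m ≥ 1 and k ≥ 0 be integers, F a field, and S ⊆ Fⁿ a finite set satisfying C(m+n-1, n)·|S| < C(n+k, n). Then there exists a non-zero polynomial over F in n variables of degree at most k vanishing at every point of S with multiplicity at least m. -/
open MvPolynomial

/-- Slack-variable equivalence: tuples of `n+1` naturals summing to `t`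
correspond to tuples of `n` naturals summing to at most `t`. -/
def slackEquiv (n t : ℕ) :
    {f : Fin (n+1) → ℕ // ∑ i, f i = t} ≃ {f : Fin n → ℕ // ∑ i, f i ≤ t} where
  toFun f := ⟨fun i => f.1 i.castSucc, by
    have h := f.2
    rw [Fin.sum_univ_castSucc] at h
    show ∑ i : Fin n, f.1 i.castSucc ≤ t
    omega⟩
  invFun g := ⟨Fin.snoc g.1 (t - ∑ i, g.1 i), by
    rw [Fin.sum_univ_castSucc]
    simp only [Fin.snoc_castSucc, Fin.snoc_last]
    have := g.2
    omega⟩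
  left_inv f := by
    apply Subtype.ext
    funext i
    refine Fin.lastCases ?_ ?_ i
    · simp only [Fin.snoc_last, Fin.snoc_castSucc]
      have h := f.2
      rw [Fin.sum_univ_castSucc] at h
      omega
    · intro j
      simp
  right_inv g := by
    apply Subtype.ext
    funext i
    simp

/-- Finsupps on `Fin N` with a given sum correspond to tuples with that sum. -/
noncomputable def finsuppTupleEquiv (N t : ℕ) :
    {d : Fin N →₀ ℕ // (d.sum fun _ e => e) = t} ≃ {f : Fin N → ℕ // ∑ i, f i = t} :=
  Finsupp.equivFunOnFinite.subtypeEquiv fun d => by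
    rw [Finsupp.sum_fintype _ _ (fun _ => rfl)]
    rfl

/-- Finsupps on `Fin N` with sum at most `t` correspond to tuples. -/
noncomputable def finsuppTupleEquivLE (N t : ℕ) :
    {d : Fin N →₀ ℕ // (d.sum fun _ e => e) ≤ t} ≃ {f : Fin N → ℕ // ∑ i, f i ≤ t} :=
  Finsupp.equivFunOnFinite.subtypeEquiv fun d => by
    rw [Finsupp.sum_fintype _ _ (fun _ => rfl)]
    rfl

/-- `Sym` as finsupps. -/
noncomputable def symFinsuppEquiv (N t : ℕ) :
    Sym (Fin N) t ≃ {d : Fin N →₀ ℕ // (d.sum fun _ e => e) = t} :=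
  Multiset.toFinsupp.toEquiv.subtypeEquiv fun s => by
    constructor
    · intro hs
      show ((Multiset.toFinsupp s).sum fun _ => id) = t
      rw [Multiset.toFinsupp_sum_eq]
      exact hs
    · intro hs
      have h2 : ((Multiset.toFinsupp s).sum fun _ => id) = t := hs
      rwa [Multiset.toFinsupp_sum_eq] at h2

/-- The main counting equivalence. -/
noncomputable def degLEEquiv (n t : ℕ) :
    {d : Fin n →₀ ℕ // (d.sum fun _ e => e) ≤ t} ≃ Sym (Fin (n+1)) t :=
  ((finsuppTupleEquivLE n t).trans
    ((slackEquiv n t).symm.trans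
      ((finsuppTupleEquiv (n+1) t).symm.trans (symFinsuppEquiv (n+1) t).symm)))

noncomputable instance degLEFintype (n t : ℕ) :
    Fintype {d : Fin n →₀ ℕ // (d.sum fun _ e => e) ≤ t} :=
  Fintype.ofEquiv _ (degLEEquiv n t).symm

theorem card_degLE (n t : ℕ) :
    Fintype.card {d : Fin n →₀ ℕ // (d.sum fun _ e => e) ≤ t} = (n + t).choose n := by
  rw [Fintype.card_congr (degLEEquiv n t), Sym.card_sym_eq_choose]
  rw [Fintype.card_fin]
  have h1 : n + 1 + t - 1 = n + t := by omega
  rw [h1, ← Nat.choose_symm (Nat.le_add_left t n)]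
  congr 1
  omega

theorem exists_poly_vanishing_with_multiplicity {F : Type} [Field F]
    (n m k : ℕ) (hn : 1 ≤ n) (hm : 1 ≤ m)
    (S : Finset (Fin n → F))
    (h : Nat.choose (m + n - 1) n * S.card < Nat.choose (n + k) n) :
    ∃ P : MvPolynomial (Fin n) F, P ≠ 0 ∧ P.totalDegree ≤ k ∧
      ∀ a ∈ S, VanishesWithMult P a m := by
  classical
  set A := {d : Fin n →₀ ℕ // (d.sum fun _ e => e) ≤ k} with hA
  set B := {d : Fin n →₀ ℕ // (d.sum fun _ e => e) ≤ m - 1} with hB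
  -- the polynomial built from coefficients
  let poly : (A → F) →ₗ[F] MvPolynomial (Fin n) F :=
  { toFun := fun c => ∑ d : A, c d • monomial d.1 (1 : F)
    map_add' := by
      intro x y
      simp [add_smul, Finset.sum_add_distrib]
    map_smul' := by
      intro r x
      simp [Finset.smul_sum, smul_smul] }
  -- the evaluation map: all low-degree coefficients of all shifts
  let T : (A → F) →ₗ[F] ((↥S × B) → F) :=
  { toFun := fun c p => coeff p.2.1 (aeval (fun j => X j + C (p.1.1 j)) (poly c))
    map_add' := by
      intro x y
      funext p
      simp [map_add]
    map_smul' := by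
      intro r x
      funext p
      simp [map_smul] }
  by_cases hinj : Function.Injective T
  · exfalso
    have hle := LinearMap.finrank_le_finrank_of_injective hinj
    rw [Module.finrank_fintype_fun_eq_card, Module.finrank_fintype_fun_eq_card] at hle
    rw [Fintype.card_prod, Fintype.card_coe] at hle
    have hcA : Fintype.card A = (n + k).choose n := card_degLE n k
    have hcB : Fintype.card B = (n + (m - 1)).choose n := card_degLE n (m - 1)
    rw [hcA, hcB] at hle
    have heq : n + (m - 1) = m + n - 1 := by omega
    rw [heq] at hle
    rw [mul_comm] at h
    omega
  · rw [Function.not_injective_iff] at hinj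
    obtain ⟨x, y, hxy, hne⟩ := hinj
    set c := x - y with hc
    have hc0 : c ≠ 0 := sub_ne_zero.mpr hne
    have hTc : T c = 0 := by rw [hc, map_sub, hxy, sub_self]
    refine ⟨poly c, ?_, ?_, ?_⟩
    · -- nonzero
      intro hP
      obtain ⟨d0, hd0⟩ := Function.ne_iff.mp hc0
      apply hd0
      have : coeff d0.1 (poly c) = c d0 := by
        show coeff d0.1 (∑ d : A, c d • monomial d.1 (1 : F)) = c d0
        rw [coeff_sum]
        rw [Finset.sum_eq_single d0]
        · simp [coeff_monomial]
        · intro b _ hb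
          have : b.1 ≠ d0.1 := fun hh => hb (Subtype.ext hh)
          simp [coeff_monomial, this]
        · simp
      rw [hP] at this
      simpa using this.symm
    · -- degree
      refine le_trans (totalDegree_finset_sum _ _) ?_
      apply Finset.sup_le
      intro d _
      refine le_trans (totalDegree_smul_le _ _) ?_
      refine le_trans (totalDegree_monomial_le _ _) d.2
    · -- vanishing
      intro a ha
      intro d hd
      by_contra hlt
      have hdm : (d.sum fun _ e => e) ≤ m - 1 := by omega
      have := congrFun hTc (⟨a, ha⟩, ⟨d, hdm⟩)
      simp only [Pi.zero_apply] at this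
      exact (MvPolynomial.mem_support_iff.mp hd) this
end
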